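/- arXiv:1001.3175 — 2 statements merged into one kernel-verified Lean document; each statement's English description precedes it below -/
import Mathlib

section
/- In an Eulerian Sheffer poset of rank n, for every 2 ≤ m ≤ n the identity 1 + Σ_{k=1}^{m} (−1)^k · D(m)/(D(k)·B(m−k)) = 0 holds. -/
open scoped Classical

/-! ## Basic notions: saturated chains, rank functions, Euler–Poincaré, Eulerian,
binomial / Sheffer / triangular posets. -/

/-- A saturated (maximal) chain from `x` to `y` in a poset, encoded as a list. -/
def IsSatChain {α : Type*} [PartialOrder α] (x y : α) (l : List α) : Prop :=
  l.Chain' (· ⋖ ·) ∧ l.head? = some x ∧ l.getLast? = some y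

/-- The number of maximal chains of the interval `[x, y]`. -/
noncomputable def chainCount {α : Type*} [PartialOrder α] (x y : α) : ℕ :=
  Nat.card {l : List α // IsSatChain x y l}

/-- `rk` is a rank function for a graded poset with `⊥`:
the bottom has rank `0` and ranks increase by one across cover relations. -/
def IsRankFunction {α : Type*} [PartialOrder α] [OrderBot α] (rk : α → ℕ) : Prop :=
  rk ⊥ = 0 ∧ ∀ x y : α, x ⋖ y → rk y = rk x + 1

/-- The interval `[x, y]` satisfies the Euler–Poincaré relation: it has as many elements
of even rank as of odd rank. -/
def EulerPoincare {α : Type*} [Fintype α] [PartialOrder α] (rk : α → ℕ) (x y : α) : Prop :=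
  (Finset.univ.filter fun z => x ≤ z ∧ z ≤ y ∧ Even (rk z)).card =
    (Finset.univ.filter fun z => x ≤ z ∧ z ≤ y ∧ ¬ Even (rk z)).card

/-- A graded poset is Eulerian if every non-singleton interval satisfies
the Euler–Poincaré relation. -/
def IsEulerian {α : Type*} [Fintype α] [PartialOrder α] (rk : α → ℕ) : Prop :=
  ∀ x y : α, x < y → EulerPoincare rk x y

/-- A binomial poset: the number of maximal chains of an interval depends only
on its length, via the factorial function `B`. -/
def IsBinomial {α : Type*} [PartialOrder α] (rk : α → ℕ) (B : ℕ → ℕ) : Prop :=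
  ∀ x y : α, x ≤ y → chainCount x y = B (rk y - rk x)

/-- A Sheffer poset: Sheffer intervals `[⊥, y]` have `D (ρ y)` maximal chains and binomial
intervals `[x, y]` with `x ≠ ⊥` have `B (ρ y - ρ x)` maximal chains. -/
def IsSheffer {α : Type*} [PartialOrder α] [OrderBot α] (rk : α → ℕ) (B D : ℕ → ℕ) : Prop :=
  (∀ y : α, chainCount ⊥ y = D (rk y)) ∧
    (∀ x y : α, x ≠ ⊥ → x ≤ y → chainCount x y = B (rk y - rk x))

/-- A triangular poset: the number of maximal chains of `[x, y]` depends only on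
`ρ x` and `ρ y`. -/
def IsTriangular {α : Type*} [PartialOrder α] (rk : α → ℕ) (B : ℕ → ℕ → ℕ) : Prop :=
  ∀ x y : α, x ≤ y → chainCount x y = B (rk x) (rk y)

/-! ## Constructions: summations, dual suspension, butterfly posets, polygon face lattices. -/

/-- The proper part of a bounded poset. -/
abbrev ProperPart (Q : Type*) [PartialOrder Q] [OrderBot Q] [OrderTop Q] : Type _ :=
  {x : Q // x ≠ ⊥ ∧ x ≠ ⊤}

/-- The summation `⊞_{i} Q i` of a family of bounded posets: identify all the minimal
elements and all the maximal elements of the disjoint union of the `Q i`. -/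
abbrev FamSum {ι : Type*} (Q : ι → Type*) [∀ i, PartialOrder (Q i)] [∀ i, OrderBot (Q i)]
    [∀ i, OrderTop (Q i)] : Type _ :=
  WithBot (WithTop ((i : ι) × ProperPart (Q i)))

/-- The `k`-summation `⊞^k Q`: identify all the minimal elements and all the maximal
elements of `k` disjoint copies of `Q`. -/
abbrev KSum (k : ℕ) (Q : Type*) [PartialOrder Q] [OrderBot Q] [OrderTop Q] : Type _ :=
  FamSum (fun _ : Fin k => Q)

/-- The rank function of a `k`-summation, induced by a rank function on `Q`. -/
def ksumRk {k : ℕ} {Q : Type*} [PartialOrder Q] [OrderBot Q] [OrderTop Q] (rk : Q → ℕ) :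
    KSum k Q → ℕ :=
  WithBot.recBotCoe 0 (WithTop.recTopCoe (rk ⊤) (fun s => rk s.2.1))

/-- The underlying type of the dual suspension minus its bottom: two new atoms together
with the proper (non-bottom) part of `P`. -/
def DSuspMid (P : Type*) [PartialOrder P] [OrderBot P] : Type _ :=
  Fin 2 ⊕ {x : P // x ≠ ⊥}

instance DSuspMid.partialOrder (P : Type*) [PartialOrder P] [OrderBot P] :
    PartialOrder (DSuspMid P) where
  le a b :=
    match a, b with
    | .inl i, .inl j => i = j
    | .inl _, .inr _ => True
    | .inr _, .inl _ => False
    | .inr x, .inr y => x ≤ y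
  le_refl a := by cases a with
    | inl i => exact rfl
    | inr x => exact le_refl x.1
  le_trans a b c hab hbc := by
    cases a with
    | inl i =>
      cases c with
      | inl k =>
        cases b with
        | inl j => exact Eq.trans (hab : i = j) (hbc : j = k)
        | inr y => exact ((hbc : False)).elim
      | inr z => trivial
    | inr x =>
      cases b with
      | inl j => exact ((hab : False)).elim
      | inr y =>
        cases c with
        | inl k => exact ((hbc : False)).elim
        | inr z => exact le_trans (α := {x : P // x ≠ ⊥}) hab hbc
  le_antisymm a b hab hba := by
    cases a with
    | inl i =>
      cases b with
      | inl j => exact congrArg Sum.inl (hab : _ = _)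
      | inr y => exact ((hba : False)).elim
    | inr x =>
      cases b with
      | inl j => exact ((hab : False)).elim
      | inr y => exact congrArg Sum.inr (le_antisymm (α := {x : P // x ≠ ⊥}) hab hba)

/-- The dual suspension `Σ*(P)`: insert two new elements between `⊥` and the atoms of `P`. -/
abbrev DSusp (P : Type*) [PartialOrder P] [OrderBot P] : Type _ :=
  WithBot (DSuspMid P)

/-- The rank function of the dual suspension induced by a rank function on `P`. -/
def dsuspRk {P : Type*} [PartialOrder P] [OrderBot P] (rk : P → ℕ) : DSusp P → ℕ :=
  WithBot.recBotCoe 0 (Sum.elim (fun _ => 1) (fun x => rk x.1 + 1))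

noncomputable instance DSuspMid.fintype (P : Type*) [PartialOrder P] [OrderBot P] [Fintype P] :
    Fintype (DSuspMid P) := by
  unfold DSuspMid; infer_instance

instance DSuspMid.orderTop (P : Type*) [PartialOrder P] [OrderBot P] [OrderTop P] [Nontrivial P] :
    OrderTop (DSuspMid P) where
  top := Sum.inr ⟨⊤, fun h => by
    rcases exists_pair_ne P with ⟨a, b, hab⟩
    have ha : a = ⊤ := le_antisymm le_top (h.le.trans bot_le)
    have hb : b = ⊤ := le_antisymm le_top (h.le.trans bot_le)
    exact hab (ha.trans hb.symm)⟩
  le_top a := by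
    cases a with
    | inl i => trivial
    | inr x => exact le_top (α := P) (a := x.1)

/-- The butterfly poset `T n` of rank `n`: a `⊥`, a `⊤`, and two elements at each rank
`1, …, n - 1`; any two elements at consecutive ranks are comparable. -/
def Butterfly (n : ℕ) : Type :=
  {p : Fin (n + 1) × Fin 2 // ((p.1 : ℕ) = 0 ∨ (p.1 : ℕ) = n) → p.2 = 0}

namespace Butterfly

instance (n : ℕ) : PartialOrder (Butterfly n) where
  le p q := p = q ∨ (p.1.1 : ℕ) < (q.1.1 : ℕ)
  le_refl p := Or.inl rfl
  le_trans p q r h₁ h₂ := by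
    rcases h₁ with rfl | h₁
    · exact h₂
    · rcases h₂ with rfl | h₂
      · exact Or.inr h₁
      · exact Or.inr (h₁.trans h₂)
  le_antisymm p q h₁ h₂ := by
    rcases h₁ with rfl | h₁
    · rfl
    · rcases h₂ with rfl | h₂
      · rfl
      · exact absurd (h₁.trans h₂) (lt_irrefl _)

instance (n : ℕ) : OrderBot (Butterfly n) where
  bot := ⟨(0, 0), fun _ => rfl⟩
  bot_le p := by
    rcases Nat.eq_zero_or_pos (p.1.1 : ℕ) with h | h
    · left
      apply Subtype.ext
      have h2 : p.1.2 = 0 := p.2 (Or.inl (by exact_mod_cast h))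
      apply Prod.ext
      · exact (Fin.ext (by simpa using h.symm))
      · exact h2.symm
    · exact Or.inr (by simpa using h)

instance (n : ℕ) : OrderTop (Butterfly n) where
  top := ⟨(Fin.last n, 0), fun _ => rfl⟩
  le_top p := by
    rcases eq_or_lt_of_le (Nat.lt_succ_iff.mp p.1.1.isLt) with h | h
    · left
      apply Subtype.ext
      have h2 : p.1.2 = 0 := p.2 (Or.inr h)
      apply Prod.ext
      · exact (Fin.ext (by simpa using h))
      · exact h2
    · exact Or.inr (by simpa using h)

instance (n : ℕ) : Fintype (Butterfly n) := by
  unfold Butterfly; exact Subtype.fintype _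

/-- The rank function of the butterfly poset. -/
def rk {n : ℕ} (p : Butterfly n) : ℕ := p.1.1

end Butterfly

/-- The middle levels (vertices and edges) of the face lattice of a `q`-gon:
`(0, i)` is the `i`-th vertex and `(1, i)` is the edge joining vertices `i` and `i + 1`. -/
def PolyMid (q : ℕ) : Type := Fin 2 × Fin q

instance PolyMid.partialOrder (q : ℕ) : PartialOrder (PolyMid q) where
  le a b := a = b ∨ (a.1 = 0 ∧ b.1 = 1 ∧ (a.2 = b.2 ∨ (a.2 : ℕ) = ((b.2 : ℕ) + 1) % q))
  le_refl a := Or.inl rfl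
  le_trans a b c h₁ h₂ := by
    rcases h₁ with rfl | h₁
    · exact h₂
    · rcases h₂ with rfl | h₂
      · exact Or.inr h₁
      · obtain ⟨hb, _⟩ := h₂
        rw [h₁.2.1] at hb
        exact absurd hb (by decide)
  le_antisymm a b h₁ h₂ := by
    rcases h₁ with rfl | h₁
    · rfl
    · rcases h₂ with rfl | h₂
      · rfl
      · obtain ⟨hb, _⟩ := h₂
        rw [h₁.2.1] at hb
        exact absurd hb (by decide)

/-- The face lattice `P_q` of a `q`-gon. -/
abbrev PolygonFaceLattice (q : ℕ) : Type := WithBot (WithTop (PolyMid q))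

noncomputable instance ProperPart.fintype (Q : Type*) [Fintype Q] [PartialOrder Q]
    [OrderBot Q] [OrderTop Q] : Fintype (ProperPart Q) :=
  Subtype.fintype _

instance WithTop.instFintypeOfFintype {X : Type*} [Fintype X] : Fintype (WithTop X) :=
  inferInstanceAs (Fintype (Option X))

instance WithBot.instFintypeOfFintype {X : Type*} [Fintype X] : Fintype (WithBot X) :=
  inferInstanceAs (Fintype (Option X))


/-! ## Auxiliary lemmas about saturated chains. -/

set_option linter.unusedSectionVars false
set_option linter.unusedVariables false

section Chains
variable {α : Type*} [PartialOrder α] {x y : α} {l : List α}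

lemma satChain_ne_nil (h : IsSatChain x y l) : l ≠ [] := by
  rintro rfl; simp [IsSatChain] at h

lemma isSatChain_iff :
    IsSatChain x y l ↔ l.Chain' (· ⋖ ·) ∧ ∃ h : l ≠ [], l.head h = x ∧ l.getLast h = y := by
  constructor
  · intro h
    have hne := satChain_ne_nil h
    obtain ⟨hc, h1, h2⟩ := h
    rw [List.head?_eq_head hne] at h1
    rw [List.getLast?_eq_getLast hne] at h2
    exact ⟨hc, hne, by injection h1, by injection h2⟩
  · rintro ⟨hc, hne, h1, h2⟩
    exact ⟨hc, by rw [List.head?_eq_head hne, h1], by rw [List.getLast?_eq_getLast hne, h2]⟩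

lemma satChain_head (h : IsSatChain x y l) (h0 : 0 < l.length) : l[0] = x := by
  rw [isSatChain_iff] at h
  obtain ⟨_, hne, h1, _⟩ := h
  rw [List.head_eq_getElem] at h1
  exact h1

lemma satChain_last (h : IsSatChain x y l) : l[l.length - 1]'(by
    have := satChain_ne_nil h
    have : 0 < l.length := List.length_pos_iff.mpr this
    omega) = y := by
  rw [isSatChain_iff] at h
  obtain ⟨_, hne, _, h2⟩ := h
  rw [List.getLast_eq_getElem] at h2
  exact h2

variable {rk : α → ℕ}

lemma chain_rk_getElem (hrk2 : ∀ a b : α, a ⋖ b → rk b = rk a + 1) (hc : l.Chain' (· ⋖ ·)) :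
    ∀ i (hi : i < l.length), rk (l[i]) = rk (l[0]'(by omega)) + i := by
  intro i
  induction i with
  | zero => intro hi; simp
  | succ n ih =>
    intro hi
    have hn : n < l.length - 1 := by omega
    have hcov := List.isChain_iff_getElem.mp hc n (by omega)
    rw [hrk2 _ _ hcov, ih (by omega)]
    omega

lemma satChain_rk (hrk2 : ∀ a b : α, a ⋖ b → rk b = rk a + 1) (h : IsSatChain x y l) : rk y = rk x + (l.length - 1) := by
  have hne := satChain_ne_nil h
  have hpos : 0 < l.length := List.length_pos_iff.mpr hne
  have := chain_rk_getElem hrk2 h.1 (l.length - 1) (by omega)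
  rwa [satChain_last h, satChain_head h hpos] at this

lemma satChain_length (hrk2 : ∀ a b : α, a ⋖ b → rk b = rk a + 1) (h : IsSatChain x y l) : l.length = rk y - rk x + 1 := by
  have hne := satChain_ne_nil h
  have hpos : 0 < l.length := List.length_pos_iff.mpr hne
  have := satChain_rk hrk2 h
  omega

lemma chain_pairwise (hc : l.Chain' (· ⋖ ·)) : l.Pairwise (· < ·) :=
  List.isChain_iff_pairwise.mp (hc.imp fun _ _ h => h.lt)

lemma satChain_getElem_le (h : IsSatChain x y l) (i : ℕ) (hi : i < l.length) :
    x ≤ l[i] ∧ l[i] ≤ y := by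
  have hp := chain_pairwise h.1
  have hpos : 0 < l.length := by omega
  have hget := List.pairwise_iff_get.mp hp
  constructor
  · rcases Nat.eq_zero_or_pos i with rfl | hi0
    · rw [satChain_head h hpos]
    · rw [← satChain_head h hpos]
      exact (hget ⟨0, hpos⟩ ⟨i, hi⟩ hi0).le
  · rcases eq_or_lt_of_le (Nat.le_sub_one_of_lt hi) with he | hlt
    · rw [← satChain_last h]; simp [he]
    · rw [← satChain_last h]
      exact (hget ⟨i, hi⟩ ⟨l.length - 1, by omega⟩ hlt).le

lemma satChain_le (h : IsSatChain x y l) : x ≤ y := by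
  have hne := satChain_ne_nil h
  have hpos : 0 < l.length := List.length_pos_iff.mpr hne
  have := (satChain_getElem_le h 0 hpos).2
  rwa [satChain_head h hpos] at this

lemma satChain_rk_lt (hrk2 : ∀ a b : α, a ⋖ b → rk b = rk a + 1) (h : IsSatChain x y l) (hxy : x ≠ y) : rk x < rk y := by
  have h2 := satChain_rk hrk2 h
  rcases Nat.lt_or_ge 1 l.length with hl | hl
  · omega
  · -- length = 1, so x = y
    have hpos : 0 < l.length := List.length_pos_iff.mpr (satChain_ne_nil h)
    have hlen : l.length = 1 := by omega
    exfalso; apply hxy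
    rw [← satChain_head h hpos, ← satChain_last h]
    simp [hlen]

end Chains

section Exist
variable {α : Type*} [PartialOrder α] [Fintype α] {x y : α}

lemma exists_satChain (hxy : x ≤ y) : ∃ l, IsSatChain x y l := by
  classical
  -- strong induction on the size of (x, y]
  suffices H : ∀ N x, x ≤ y → (Finset.univ.filter fun w => x < w ∧ w ≤ y).card ≤ N →
      ∃ l, IsSatChain x y l by
    exact H _ x hxy le_rfl
  intro N
  induction N with
  | zero =>
    intro x hxy hcard
    have : x = y := by
      by_contra hne
      have hy : y ∈ Finset.univ.filter fun w => x < w ∧ w ≤ y := by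
        simp [lt_of_le_of_ne hxy hne]
      have := Finset.card_pos.mpr ⟨y, hy⟩
      omega
    subst this
    exact ⟨[x], List.isChain_singleton _, by simp, by simp⟩
  | succ N ih =>
    intro x hxy hcard
    rcases eq_or_lt_of_le hxy with rfl | hlt
    · exact ⟨[x], List.isChain_singleton _, by simp, by simp⟩
    · set s : Set α := {w | x < w ∧ w ≤ y} with hs
      have hsne : y ∈ s := ⟨hlt, le_rfl⟩
      obtain ⟨z, hz, hzmin⟩ := (Set.toFinite s).exists_minimal ⟨y, hsne⟩
      have hcov : x ⋖ z := by
        refine ⟨hz.1, fun w hw hwz => ?_⟩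
        have hws : w ∈ s := ⟨hw, hwz.le.trans hz.2⟩
        exact absurd (hzmin hws hwz.le) (fun h => lt_irrefl _ (hwz.trans_le h))
      have hsub : (Finset.univ.filter fun w => z < w ∧ w ≤ y) ⊂
          (Finset.univ.filter fun w => x < w ∧ w ≤ y) := by
        refine Finset.ssubset_iff_of_subset ?_ |>.mpr ⟨z, by simp [hz.1, hz.2], by simp⟩
        intro w hw
        simp only [Finset.mem_filter, Finset.mem_univ, true_and] at hw ⊢
        exact ⟨hz.1.trans hw.1, hw.2⟩
      have hcard' : (Finset.univ.filter fun w => z < w ∧ w ≤ y).card ≤ N := by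
        have := Finset.card_lt_card hsub
        omega
      obtain ⟨l, hl⟩ := ih z hz.2 hcard'
      refine ⟨x :: l, ?_, by simp, ?_⟩
      · obtain ⟨a, t, rfl⟩ : ∃ a t, l = a :: t := by
          rcases l with _ | ⟨a, t⟩
          · simp [IsSatChain] at hl
          · exact ⟨_, _, rfl⟩
        have ha : a = z := by
          have := hl.2.1; simpa using this
        refine List.isChain_cons_cons.mpr ?_
        exact ⟨ha ▸ hcov, hl.1⟩
      · obtain ⟨a, t, rfl⟩ : ∃ a t, l = a :: t := by
          rcases l with _ | ⟨a, t⟩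
          · simp [IsSatChain] at hl
          · exact ⟨_, _, rfl⟩
        rw [List.getLast?_cons_cons]
        exact hl.2.2

lemma satChain_finite (x y : α) : (setOf (IsSatChain x y)).Finite := by
  apply Set.Finite.subset (List.finite_length_le α (Fintype.card α))
  intro l hl
  have hp : l.Pairwise (· < ·) :=
    List.isChain_iff_pairwise.mp (hl.1.imp fun _ _ h => h.lt)
  have hnd : l.Nodup := hp.imp ne_of_lt
  simpa using List.Nodup.length_le_card hnd

noncomputable instance satChainFintype (x y : α) : Finite {l : List α // IsSatChain x y l} :=
  satChain_finite x y

lemma chainCount_pos (hxy : x ≤ y) : 0 < chainCount x y := by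
  obtain ⟨l, hl⟩ := exists_satChain hxy
  exact Nat.card_pos_iff.mpr ⟨⟨⟨l, hl⟩⟩, satChainFintype x y⟩

end Exist

section Split
variable {α : Type*} [PartialOrder α] {x y z : α} {l l₁ l₂ : List α} {rk : α → ℕ}

lemma getElem_idx (l : List α) {i j : ℕ} (h : i = j) {hi : i < l.length} :
    l[i] = l[j]'(h ▸ hi) := by subst h; rfl

lemma satChain_append (h₁ : IsSatChain x z l₁) (h₂ : IsSatChain z y l₂) :
    IsSatChain x y (l₁ ++ l₂.tail) := by
  have hne₁ := satChain_ne_nil h₁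
  obtain ⟨a, t, rfl⟩ : ∃ a t, l₂ = a :: t := by
    rcases l₂ with _ | ⟨a, t⟩
    · exact absurd rfl (satChain_ne_nil h₂)
    · exact ⟨_, _, rfl⟩
  have ha : a = z := by have := h₂.2.1; simpa using this
  subst ha
  refine ⟨?_, ?_, ?_⟩
  · apply List.IsChain.append h₁.1 (List.isChain_cons.mp h₂.1).2
    intro p hp q hq
    have hp' : p = a := by rw [h₁.2.2] at hp; simpa using hp.symm
    subst hp'
    exact (List.isChain_cons.mp h₂.1).1 q hq
  · show (l₁ ++ t).head? = some x
    rw [List.head?_append_of_ne_nil _ hne₁]; exact h₁.2.1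
  · show (l₁ ++ t).getLast? = some y
    rcases t with _ | ⟨b, t'⟩
    · have hzy : a = y := by have := h₂.2.2; simpa using this
      simp only [List.append_nil]
      rw [← hzy]; exact h₁.2.2
    · rw [List.getLast?_append_cons]
      have := h₂.2.2
      rwa [List.getLast?_cons_cons] at this

lemma satChain_take (h : IsSatChain x y l) {j : ℕ} (hj : j < l.length) :
    IsSatChain x (l[j]) (l.take (j+1)) := by
  have hlen : (l.take (j+1)).length = j + 1 := by
    rw [List.length_take]; omega
  have hne : l.take (j+1) ≠ [] := by rw [← List.length_pos_iff]; omega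
  rw [isSatChain_iff]
  refine ⟨h.1.take _, hne, ?_, ?_⟩
  · rw [List.head_eq_getElem, List.getElem_take]
    exact satChain_head h (by omega)
  · rw [List.getLast_eq_getElem, List.getElem_take,
      getElem_idx _ (show (l.take (j+1)).length - 1 = j by rw [hlen]; omega)]

lemma satChain_drop (h : IsSatChain x y l) {j : ℕ} (hj : j < l.length) :
    IsSatChain (l[j]) y (l.drop j) := by
  have hlen : (l.drop j).length = l.length - j := by simp
  have hne : l.drop j ≠ [] := by rw [← List.length_pos_iff]; omega
  rw [isSatChain_iff]
  refine ⟨h.1.drop _, hne, ?_, ?_⟩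
  · rw [List.head_eq_getElem, List.getElem_drop, getElem_idx _ (Nat.add_zero j)]
  · rw [List.getLast_eq_getElem, List.getElem_drop,
      getElem_idx _ (show j + ((l.drop j).length - 1) = l.length - 1 by rw [hlen]; omega)]
    exact satChain_last h

lemma satChain_drop_eq (h₁ : IsSatChain x z l₁) (h₂ : IsSatChain z y l₂) :
    (l₁ ++ l₂.tail).drop (l₁.length - 1) = l₂ := by
  have hne₁ := satChain_ne_nil h₁
  have hpos : 0 < l₁.length := List.length_pos_iff.mpr hne₁
  rw [List.drop_append]
  have h1 : l₁.length - 1 - l₁.length = 0 := by omega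
  rw [h1, List.drop_zero]
  have h2 : l₁.drop (l₁.length - 1) = [z] := by
    rw [List.drop_eq_getElem_cons (by omega)]
    rw [List.drop_eq_nil_of_le (by omega), satChain_last h₁]
  rw [h2]
  have hne₂ := satChain_ne_nil h₂
  have hh : l₂.head hne₂ = z := (isSatChain_iff.mp h₂).2.choose_spec.1
  show z :: l₂.tail = l₂
  rw [← hh, List.cons_head_tail]

end Split

section Count
variable {α : Type*} [PartialOrder α] [Fintype α] {x y : α} {rk : α → ℕ}

lemma chainCount_split (hrk2 : ∀ a b : α, a ⋖ b → rk b = rk a + 1)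
    (hxy : x ≤ y) (k : ℕ) (hk1 : rk x ≤ k) (hk2 : k ≤ rk y) :
    chainCount x y = ∑ z ∈ Finset.univ.filter (fun z => x ≤ z ∧ z ≤ y ∧ rk z = k),
      chainCount x z * chainCount z y := by
  classical
  set P : α → Prop := fun z => x ≤ z ∧ z ≤ y ∧ rk z = k with hP
  let g : ((z : Subtype P) × ({l : List α // IsSatChain x z.1 l} × {l : List α // IsSatChain z.1 y l})) →
      {l : List α // IsSatChain x y l} := fun p =>
    ⟨p.2.1.1 ++ p.2.2.1.tail, satChain_append p.2.1.2 p.2.2.2⟩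
  have hg : Function.Bijective g := by
    constructor
    · rintro ⟨⟨z, hz⟩, ⟨l₁, h₁⟩, ⟨l₂, h₂⟩⟩ ⟨⟨z', hz'⟩, ⟨l₁', h₁'⟩, ⟨l₂', h₂'⟩⟩ hEq
      simp only [g, Subtype.mk.injEq] at hEq
      have hL : l₁.length = k - rk x + 1 := by
        rw [satChain_length hrk2 h₁, hz.2.2]
      have hL' : l₁'.length = k - rk x + 1 := by
        rw [satChain_length hrk2 h₁', hz'.2.2]
      have e₁ : l₁ = l₁' := by
        have t1 : (l₁ ++ l₂.tail).take l₁.length = l₁ := List.take_left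
        have t2 : (l₁' ++ l₂'.tail).take l₁'.length = l₁' := List.take_left
        rw [← t1, ← t2, hEq, hL, hL']
      subst e₁
      have e₂ : l₂ = l₂' := by
        have t1 := satChain_drop_eq h₁ h₂
        have t2 := satChain_drop_eq h₁' h₂'
        rw [← t1, ← t2, hEq]
      subst e₂
      have e₀ : z = z' := by
        have := h₁.2.2.symm.trans h₁'.2.2
        injection this
      subst e₀
      rfl
    · rintro ⟨l, hl⟩
      have hlen := satChain_length hrk2 hl
      have hjl : k - rk x < l.length := by omega
      have hzrk : rk (l[k - rk x]) = k := by
        have h0 : (0 : ℕ) < l.length := by omega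
        have := chain_rk_getElem hrk2 hl.1 (k - rk x) hjl
        rw [satChain_head hl h0] at this
        omega
      refine ⟨⟨⟨l[k - rk x], (satChain_getElem_le hl _ hjl).1,
        (satChain_getElem_le hl _ hjl).2, hzrk⟩,
        ⟨l.take (k - rk x + 1), satChain_take hl hjl⟩,
        ⟨l.drop (k - rk x), satChain_drop hl hjl⟩⟩, ?_⟩
      apply Subtype.ext
      show l.take (k - rk x + 1) ++ (l.drop (k - rk x)).tail = l
      rw [List.tail_drop, List.take_append_drop]
  haveI hfib : ∀ z : Subtype P,
      Fintype ({l : List α // IsSatChain x z.1 l} × {l : List α // IsSatChain z.1 y l}) :=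
    fun z => Fintype.ofFinite _
  have h1 : chainCount x y =
      Nat.card ((z : Subtype P) × ({l : List α // IsSatChain x z.1 l} × {l : List α // IsSatChain z.1 y l})) :=
    (Nat.card_congr (Equiv.ofBijective g hg)).symm
  rw [h1, Nat.card_eq_fintype_card, Fintype.card_sigma,
    Finset.sum_subtype (p := P) _ (fun z => by simp [hP]) (fun z => chainCount x z * chainCount z y)]
  apply Finset.sum_congr rfl
  intro z _
  rw [← Nat.card_eq_fintype_card, Nat.card_prod]
  rfl

end Count
/-- In an Eulerian Sheffer poset of rank `n`, for every `2 ≤ m ≤ n` we have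
`1 + ∑_{k=1}^{m} (-1)^k D(m) / (D(k) B(m-k)) = 0`. -/
theorem statement12 {α : Type*} [Fintype α] [PartialOrder α] [BoundedOrder α]
    (rk : α → ℕ) (B D : ℕ → ℕ) (hrk : IsRankFunction rk) (hS : IsSheffer rk B D)
    (hE : IsEulerian rk) (n : ℕ) (hrank : rk ⊤ = n) (m : ℕ) (hm2 : 2 ≤ m) (hmn : m ≤ n) :
    (1 : ℚ) + ∑ k ∈ Finset.Icc 1 m,
        (-1 : ℚ) ^ k * (D m : ℚ) / ((D k : ℚ) * (B (m - k) : ℚ)) = 0 := by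

  classical
  obtain ⟨hrk0, hrk2⟩ := hrk
  -- find an element y₀ of rank m
  obtain ⟨lc, hlc⟩ := exists_satChain (x := (⊥ : α)) (y := (⊤ : α)) bot_le
  have hlen := satChain_length hrk2 hlc
  rw [hrank, hrk0] at hlen
  have hm_lt : m < lc.length := by omega
  have h0lt : 0 < lc.length := by omega
  set y₀ := lc[m] with hy₀
  have hrky : rk y₀ = m := by
    have h := chain_rk_getElem hrk2 hlc.1 m hm_lt
    rw [satChain_head hlc h0lt, hrk0] at h
    rw [hy₀, h]
    omega
  have hby : (⊥ : α) ≤ y₀ := (satChain_getElem_le hlc m hm_lt).1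
  have hmono_lt : ∀ a b : α, a < b → rk a < rk b := by
    intro a b hab
    obtain ⟨l, hl⟩ := exists_satChain hab.le
    exact satChain_rk_lt hrk2 hl hab.ne
  have hmono : ∀ a b : α, a ≤ b → rk a ≤ rk b := by
    intro a b hab
    rcases eq_or_lt_of_le hab with rfl | h
    · exact le_rfl
    · exact (hmono_lt _ _ h).le
  have hbotlt : (⊥ : α) < y₀ := by
    refine bot_lt_iff_ne_bot.mpr fun hb => ?_
    rw [hb, hrk0] at hrky
    omega
  set N : ℕ → ℕ := fun k =>
    (Finset.univ.filter fun z => (⊥ : α) ≤ z ∧ z ≤ y₀ ∧ rk z = k).card with hN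
  have hsplit : ∀ k, 1 ≤ k → k ≤ m → D m = N k * (D k * B (m - k)) := by
    intro k hk1 hkm
    have h0 := chainCount_split hrk2 hby k (by rw [hrk0]; omega) (by rw [hrky]; omega)
    rw [hS.1 y₀, hrky] at h0
    rw [h0]
    rw [Finset.sum_congr rfl (g := fun _ => D k * B (m - k)) (fun z hz => by
      simp only [Finset.mem_filter, Finset.mem_univ, true_and] at hz
      obtain ⟨hbz, hzy, hzk⟩ := hz
      have hzb : z ≠ ⊥ := by intro h; rw [h, hrk0] at hzk; omega
      rw [hS.1 z, hzk, hS.2 z y₀ hzb hzy, hrky, hzk])]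
    rw [Finset.sum_const, smul_eq_mul]
  have hDm_pos : 0 < D m := by
    have := chainCount_pos hby
    rwa [hS.1 y₀, hrky] at this
  have hfac_pos : ∀ k, 1 ≤ k → k ≤ m → (D k * B (m - k)) ≠ 0 := by
    intro k hk1 hkm
    have h := hsplit k hk1 hkm
    intro h0
    rw [h0, mul_zero] at h
    omega
  have hN0 : N 0 = 1 := by
    rw [hN, Finset.card_eq_one]
    refine ⟨⊥, ?_⟩
    ext z
    simp only [Finset.mem_filter, Finset.mem_univ, true_and, Finset.mem_singleton]
    constructor
    · rintro ⟨-, hzy, hz0⟩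
      by_contra hne
      have := hmono_lt ⊥ z (bot_lt_iff_ne_bot.mpr hne)
      rw [hrk0] at this
      omega
    · rintro rfl
      exact ⟨le_rfl, hby, hrk0⟩
  -- Euler–Poincaré on [⊥, y₀]
  have hEP := hE ⊥ y₀ hbotlt
  rw [EulerPoincare] at hEP
  -- fiberwise counting of the two sides
  have hEcard : (Finset.univ.filter fun z => (⊥ : α) ≤ z ∧ z ≤ y₀ ∧ Even (rk z)).card
      = ∑ k ∈ (Finset.Icc 0 m).filter (fun k => Even k), N k := by
    rw [Finset.card_eq_sum_card_fiberwise (f := rk)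
      (t := (Finset.Icc 0 m).filter (fun k => Even k)) (fun z hz => by
        simp only [Finset.coe_filter, Finset.mem_coe, Set.mem_setOf_eq, Finset.mem_filter, Finset.mem_univ, true_and, Finset.mem_Icc] at hz ⊢
        refine ⟨⟨Nat.zero_le _, ?_⟩, hz.2.2⟩
        have := hmono z y₀ hz.2.1
        omega)]
    apply Finset.sum_congr rfl
    intro k hk
    simp only [Finset.mem_filter, Finset.mem_Icc] at hk
    rw [hN]
    congr 1
    ext z
    simp only [Finset.mem_filter, Finset.mem_univ, true_and]
    constructor
    · rintro ⟨⟨hbz, hzy, -⟩, hzk⟩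
      exact ⟨hbz, hzy, hzk⟩
    · rintro ⟨hbz, hzy, hzk⟩
      exact ⟨⟨hbz, hzy, hzk ▸ hk.2⟩, hzk⟩
  have hOcard : (Finset.univ.filter fun z => (⊥ : α) ≤ z ∧ z ≤ y₀ ∧ ¬ Even (rk z)).card
      = ∑ k ∈ (Finset.Icc 0 m).filter (fun k => ¬ Even k), N k := by
    rw [Finset.card_eq_sum_card_fiberwise (f := rk)
      (t := (Finset.Icc 0 m).filter (fun k => ¬ Even k)) (fun z hz => by
        simp only [Finset.coe_filter, Finset.mem_coe, Set.mem_setOf_eq, Finset.mem_filter, Finset.mem_univ, true_and, Finset.mem_Icc] at hz ⊢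
        refine ⟨⟨Nat.zero_le _, ?_⟩, hz.2.2⟩
        have := hmono z y₀ hz.2.1
        omega)]
    apply Finset.sum_congr rfl
    intro k hk
    simp only [Finset.mem_filter, Finset.mem_Icc] at hk
    rw [hN]
    congr 1
    ext z
    simp only [Finset.mem_filter, Finset.mem_univ, true_and]
    constructor
    · rintro ⟨⟨hbz, hzy, -⟩, hzk⟩
      exact ⟨hbz, hzy, hzk⟩
    · rintro ⟨hbz, hzy, hzk⟩
      exact ⟨⟨hbz, hzy, hzk ▸ hk.2⟩, hzk⟩
  -- the alternating sum of the N k vanishes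
  have h1even : ∀ k ∈ (Finset.Icc 0 m).filter (fun k => Even k),
      (-1 : ℚ) ^ k * (N k : ℚ) = (N k : ℚ) := by
    intro k hk
    simp only [Finset.mem_filter] at hk
    rw [Even.neg_one_pow hk.2, one_mul]
  have h1odd : ∀ k ∈ (Finset.Icc 0 m).filter (fun k => ¬ Even k),
      (-1 : ℚ) ^ k * (N k : ℚ) = -(N k : ℚ) := by
    intro k hk
    simp only [Finset.mem_filter] at hk
    rw [Odd.neg_one_pow (Nat.odd_iff.mpr (Nat.not_even_iff.mp hk.2)), neg_one_mul]
  have hA : ∑ k ∈ (Finset.Icc 0 m).filter (fun k => Even k), ((-1 : ℚ) ^ k * (N k : ℚ))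
      = ((∑ k ∈ (Finset.Icc 0 m).filter (fun k => Even k), N k : ℕ) : ℚ) :=
    (Finset.sum_congr rfl h1even).trans (by push_cast; rfl)
  have hB : ∑ k ∈ (Finset.Icc 0 m).filter (fun k => ¬ Even k), ((-1 : ℚ) ^ k * (N k : ℚ))
      = -((∑ k ∈ (Finset.Icc 0 m).filter (fun k => ¬ Even k), N k : ℕ) : ℚ) :=
    (Finset.sum_congr rfl h1odd).trans (by push_cast [Finset.sum_neg_distrib]; rfl)
  have hsum0 : ∑ k ∈ Finset.Icc 0 m, ((-1 : ℚ) ^ k * (N k : ℚ)) = 0 := by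
    rw [← Finset.sum_filter_add_sum_filter_not (Finset.Icc 0 m) (fun k => Even k), hA, hB,
      ← hEcard, ← hOcard, hEP]
    ring
  have hIcc : Finset.Icc 0 m = insert 0 (Finset.Icc 1 m) := by
    ext k
    simp only [Finset.mem_Icc, Finset.mem_insert]
    omega
  rw [hIcc, Finset.sum_insert (by simp)] at hsum0
  rw [pow_zero, hN0, Nat.cast_one, one_mul] at hsum0
  have hterm : ∀ k ∈ Finset.Icc 1 m,
      (-1 : ℚ) ^ k * (D m : ℚ) / ((D k : ℚ) * (B (m - k) : ℚ)) = (-1 : ℚ) ^ k * (N k : ℚ) := by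
    intro k hk
    simp only [Finset.mem_Icc] at hk
    have hs := hsplit k hk.1 hk.2
    have hne : ((D k : ℚ) * (B (m - k) : ℚ)) ≠ 0 := by
      have h := hfac_pos k hk.1 hk.2
      exact_mod_cast Nat.cast_ne_zero.mpr h
    field_simp
    rw [hs]
    push_cast
    field_simp [(mul_ne_zero_iff.mp hne).1, (mul_ne_zero_iff.mp hne).2]
  rw [Finset.sum_congr rfl hterm]
  exact hsum0
end

section
/- There is no Eulerian Sheffer poset of rank n ≥ 6 with binomial factorial function B(3) = 6 and Sheffer factorial function D(3) = 10. -/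
open scoped Classical

/-- The face lattice `P_q` of a `q`-gon. -/
abbrev PolygonPoset (q : ℕ) : Type := WithBot (WithTop (PolyMid q))

namespace S13
open Finset

variable {α : Type*} [PartialOrder α]

lemma chain_head_le_getLast :
    ∀ {l : List α}, l.Chain' (· ⋖ ·) → ∀ {a c : α},
      l.head? = some a → l.getLast? = some c → a ≤ c := by
  intro l
  induction l with
  | nil => intro _ a c h; simp at h
  | cons b t ih =>
    intro hch a c ha hc
    simp only [List.head?_cons, Option.some.injEq] at ha
    subst ha
    cases t with
    | nil => simp at hc; subst hc; rfl
    | cons b' t' =>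
      rw [List.Chain', List.isChain_cons_cons] at hch
      have h1 : b ≤ b' := hch.1.le
      have h2 : b' ≤ c := ih hch.2 (by simp) (by rw [← hc, List.getLast?_cons_cons])
      exact h1.trans h2

lemma isSatChain_nodup {x y : α} {l : List α} (h : IsSatChain x y l) : l.Nodup := by
  have h1 : l.Chain' (· < ·) := List.IsChain.imp (fun a b hab => hab.lt) h.1
  have h2 : l.Pairwise (· < ·) := List.isChain_iff_pairwise.mp h1
  exact h2.nodup

instance satChainFinite [Fintype α] (x y : α) : Finite {l : List α // IsSatChain x y l} := by
  apply Finite.of_injective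
    (fun l => (⟨l.1, isSatChain_nodup l.2⟩ : {l : List α // l.Nodup}))
  intro a b h
  have : a.1 = b.1 := congrArg (Subtype.val (p := fun l : List α => l.Nodup)) h
  exact Subtype.ext this

lemma isSatChain_self_iff {x : α} {l : List α} : IsSatChain x x l ↔ l = [x] := by
  constructor
  · rintro ⟨hch, hh, hl⟩
    cases l with
    | nil => simp at hh
    | cons b t =>
      have hb : b = x := by simpa using hh
      subst hb
      cases t with
      | nil => rfl
      | cons b' t' =>
        rw [List.Chain', List.isChain_cons_cons] at hch
        have h2 : b' ≤ b := chain_head_le_getLast hch.2 (by simp)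
          (by rw [← hl, List.getLast?_cons_cons])
        exact absurd (hch.1.lt.trans_le h2) (lt_irrefl b)
  · rintro rfl
    exact ⟨List.isChain_singleton x, by simp, by simp⟩

lemma chainCount_self (x : α) : chainCount x x = 1 := by
  unfold chainCount
  have h : ∀ l : List α, IsSatChain x x l ↔ l = [x] := fun l => isSatChain_self_iff
  rw [Nat.card_congr (Equiv.subtypeEquivRight h)]
  haveI : Unique {l : List α // l = [x]} :=
    ⟨⟨⟨[x], rfl⟩⟩, by rintro ⟨l, rfl⟩; rfl⟩
  exact Nat.card_unique

lemma chainCount_eq_sum_covby_left [Fintype α] {x y : α} (hxy : x ≠ y) :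
    chainCount x y = ∑ z ∈ univ.filter (fun z => x ⋖ z ∧ z ≤ y), chainCount z y := by
  classical
  have key : Function.Bijective
      (fun p : (Σ z : {z : α // x ⋖ z ∧ z ≤ y}, {l : List α // IsSatChain z.1 y l}) =>
        (⟨x :: p.2.1, by
          obtain ⟨⟨z, hz1, hz2⟩, ⟨l, hl1, hl2, hl3⟩⟩ := p
          obtain ⟨t, rfl⟩ : ∃ t, l = z :: t := by
            cases l with
            | nil => simp at hl2
            | cons a t =>
              simp only [List.head?_cons, Option.some.injEq] at hl2
              exact ⟨t, by rw [hl2]⟩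
          refine ⟨?_, by simp, ?_⟩
          · rw [List.Chain', List.isChain_cons_cons]; exact ⟨hz1, hl1⟩
          · rw [List.getLast?_cons_cons]; exact hl3⟩ :
            {l : List α // IsSatChain x y l})) := by
    constructor
    · rintro ⟨⟨z, hz⟩, ⟨l, hl⟩⟩ ⟨⟨z', hz'⟩, ⟨l', hl'⟩⟩ h
      have hll : l = l' := by
        have h2 : x :: l = x :: l' := congrArg Subtype.val h
        exact (List.cons.injEq _ _ _ _ ▸ h2 : x = x ∧ l = l').2
      subst hll
      have hzz : z = z' := by
        have h1 := hl.2.1; have h2 := hl'.2.1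
        rw [h1] at h2; exact Option.some.inj h2
      subst hzz
      rfl
    · rintro ⟨l, hl1, hl2, hl3⟩
      cases l with
      | nil => simp at hl2
      | cons a t =>
        have ha : a = x := by simpa using hl2
        subst ha
        cases t with
        | nil =>
          have : a = y := by simpa using hl3
          exact absurd this hxy
        | cons z t' =>
          rw [List.Chain', List.isChain_cons_cons] at hl1
          have hzy : z ≤ y := chain_head_le_getLast hl1.2 (by simp)
            (by rw [← hl3, List.getLast?_cons_cons])
          exact ⟨⟨⟨z, hl1.1, hzy⟩, ⟨z :: t', hl1.2, by simp,
            by rw [← hl3, List.getLast?_cons_cons]⟩⟩, rfl⟩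
  letI : Fintype {z : α // x ⋖ z ∧ z ≤ y} := Fintype.ofFinite _
  letI instL : ∀ z : {z : α // x ⋖ z ∧ z ≤ y}, Fintype {l : List α // IsSatChain z.1 y l} :=
    fun z => Fintype.ofFinite _
  have h2 : chainCount x y
      = Nat.card (Σ z : {z : α // x ⋖ z ∧ z ≤ y}, {l : List α // IsSatChain z.1 y l}) :=
    (Nat.card_congr (Equiv.ofBijective _ key)).symm
  rw [h2, Nat.card_eq_fintype_card, Fintype.card_sigma]
  rw [Finset.sum_subtype (p := fun z => x ⋖ z ∧ z ≤ y)
    (univ.filter (fun z => x ⋖ z ∧ z ≤ y))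
    (by intro z; simp) (fun z => chainCount z y)]
  apply Finset.sum_congr rfl
  intro z _
  rw [chainCount, Nat.card_eq_fintype_card]




lemma chainCount_dual (x y : α) :
    chainCount (OrderDual.toDual y) (OrderDual.toDual x) = chainCount x y := by
  apply Nat.card_congr
  refine ⟨fun l => ⟨(l.1.map OrderDual.ofDual).reverse, ?_⟩,
          fun l => ⟨(l.1.map OrderDual.toDual).reverse, ?_⟩, ?_, ?_⟩
  · obtain ⟨l, h1, h2, h3⟩ := l
    refine ⟨?_, ?_, ?_⟩
    · rw [List.Chain', List.isChain_reverse, List.isChain_map]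
      refine List.IsChain.imp ?_ h1
      intro a b hab
      exact (toDual_covBy_toDual_iff (a := OrderDual.ofDual b) (b := OrderDual.ofDual a)).mp hab
    · rw [List.head?_reverse, List.getLast?_map, h3]; rfl
    · rw [List.getLast?_reverse, List.head?_map, h2]; rfl
  · obtain ⟨l, h1, h2, h3⟩ := l
    refine ⟨?_, ?_, ?_⟩
    · rw [List.Chain', List.isChain_reverse, List.isChain_map]
      refine List.IsChain.imp ?_ h1
      intro a b hab
      exact (toDual_covBy_toDual_iff (a := a) (b := b)).mpr hab
    · rw [List.head?_reverse, List.getLast?_map, h3]; rfl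
    · rw [List.getLast?_reverse, List.head?_map, h2]; rfl
  · rintro ⟨l, hl⟩
    apply Subtype.ext
    simp only [List.map_reverse, List.reverse_reverse, List.map_map]
    have hid : (⇑OrderDual.toDual ∘ ⇑OrderDual.ofDual) = (id : αᵒᵈ → αᵒᵈ) := rfl
    rw [hid, List.map_id]
  · rintro ⟨l, hl⟩
    apply Subtype.ext
    simp only [List.map_reverse, List.reverse_reverse, List.map_map]
    have hid : (⇑OrderDual.ofDual ∘ ⇑OrderDual.toDual) = (id : α → α) := rfl
    rw [hid, List.map_id]

lemma chainCount_eq_sum_covby_right [Fintype α] {x y : α} (hxy : x ≠ y) :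
    chainCount x y = ∑ w ∈ univ.filter (fun w => x ≤ w ∧ w ⋖ y), chainCount x w := by
  classical
  have hd := chainCount_dual x y
  have hne : (OrderDual.toDual y) ≠ (OrderDual.toDual x) := fun h => hxy (congrArg OrderDual.ofDual h).symm
  rw [← hd, chainCount_eq_sum_covby_left hne]
  refine Finset.sum_bij (fun (z : αᵒᵈ) _ => OrderDual.ofDual z) ?_ ?_ ?_ ?_
  · intro z hz
    simp only [Finset.mem_filter, Finset.mem_univ, true_and] at hz ⊢
    exact ⟨hz.2, (toDual_covBy_toDual_iff (a := OrderDual.ofDual z) (b := y)).mp hz.1⟩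
  · intro a _ b _ h; exact congrArg OrderDual.toDual h
  · intro w hw
    simp only [Finset.mem_filter, Finset.mem_univ, true_and] at hw ⊢
    exact ⟨OrderDual.toDual w, ⟨(toDual_covBy_toDual_iff (a := w) (b := y)).mpr hw.2, hw.1⟩, rfl⟩
  · intro z hz
    exact chainCount_dual x (OrderDual.ofDual z)

lemma exists_covby_le [Fintype α] {x y : α} (h : x < y) : ∃ z, x ⋖ z ∧ z ≤ y := by
  classical
  have hne : (univ.filter (fun z => x < z ∧ z ≤ y)).Nonempty :=
    ⟨y, by simp [h]⟩
  obtain ⟨m, hm, hmin⟩ := Finset.exists_minimal hne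
  simp only [Finset.mem_filter, Finset.mem_univ, true_and] at hm
  refine ⟨m, ⟨hm.1, fun c hc1 hc2 => ?_⟩, hm.2⟩
  exact hc2.not_ge (hmin (by simp [hc1, hc2.le.trans hm.2]) hc2.le)

lemma exists_le_covby [Fintype α] {x y : α} (h : x < y) : ∃ w, x ≤ w ∧ w ⋖ y := by
  classical
  have hne : (univ.filter (fun w => x ≤ w ∧ w < y)).Nonempty :=
    ⟨x, by simp [h]⟩
  obtain ⟨m, hm, hmax⟩ := Finset.exists_maximal hne
  simp only [Finset.mem_filter, Finset.mem_univ, true_and] at hm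
  refine ⟨m, hm.1, hm.2, fun c hc1 hc2 => ?_⟩
  exact hc1.not_ge (hmax (by simp [hm.1.trans hc1.le, hc2]) hc1.le)

lemma chainCount_pos [Fintype α] {x y : α} (h : x ≤ y) : 0 < chainCount x y := by
  classical
  revert h
  induction x using WellFoundedGT.induction with
  | _ x ih =>
    intro h
    rcases eq_or_lt_of_le h with rfl | hlt
    · rw [chainCount_self]; norm_num
    · obtain ⟨z, hz1, hz2⟩ := exists_covby_le hlt
      rw [chainCount_eq_sum_covby_left hlt.ne]
      have hzm : z ∈ univ.filter (fun z => x ⋖ z ∧ z ≤ y) := by simp [hz1, hz2]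
      calc 0 < chainCount z y := ih z hz1.lt hz2
        _ ≤ ∑ w ∈ univ.filter (fun z => x ⋖ z ∧ z ≤ y), chainCount w y :=
          Finset.single_le_sum (f := fun w => chainCount w y) (fun i _ => Nat.zero_le _) hzm

section RankLemmas
variable [Fintype α] [OrderBot α] {rk : α → ℕ}

lemma rk_lt_of_lt (hrk : IsRankFunction rk) {x y : α} (h : x < y) : rk x < rk y := by
  revert h
  induction y using WellFoundedLT.induction with
  | _ y ih =>
    intro h
    obtain ⟨w, hxw, hwy⟩ := exists_le_covby h
    have hr : rk y = rk w + 1 := hrk.2 w y hwy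
    rcases eq_or_lt_of_le hxw with rfl | hlt
    · omega
    · have := ih w hwy.lt hlt; omega

lemma rk_le_of_le (hrk : IsRankFunction rk) {x y : α} (h : x ≤ y) : rk x ≤ rk y := by
  rcases eq_or_lt_of_le h with rfl | hlt
  · exact le_refl _
  · exact (rk_lt_of_lt hrk hlt).le

lemma eq_of_le_of_rk_ge (hrk : IsRankFunction rk) {x y : α} (h : x ≤ y)
    (hr : rk y ≤ rk x) : x = y := by
  rcases eq_or_lt_of_le h with rfl | hlt
  · rfl
  · exact absurd (rk_lt_of_lt hrk hlt) (by omega)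

lemma covby_of_lt_rk (hrk : IsRankFunction rk) {x y : α} (h : x < y)
    (hr : rk y = rk x + 1) : x ⋖ y := by
  refine ⟨h, fun c hc1 hc2 => ?_⟩
  have := rk_lt_of_lt hrk hc1
  have := rk_lt_of_lt hrk hc2
  omega

lemma lt_of_le_of_rk_lt (hrk : IsRankFunction rk) {x y : α} (h : x ≤ y)
    (hr : rk x < rk y) : x < y :=
  lt_of_le_of_ne h (fun he => by rw [he] at hr; omega)

lemma exists_rk_between (hrk : IsRankFunction rk) {x : α} {m : ℕ} (h1 : rk x ≤ m) :
    ∀ {y : α}, x ≤ y → m ≤ rk y → ∃ z, x ≤ z ∧ z ≤ y ∧ rk z = m := by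
  intro y
  induction y using WellFoundedLT.induction with
  | _ y ih =>
    intro hxy h2
    rcases eq_or_lt_of_le h2 with he | hlt
    · by_cases hm : rk y = m
      · exact ⟨y, hxy, le_refl _, hm⟩
      · omega
    · have hxyne : x ≠ y := fun he2 => by rw [he2] at h1; omega
      obtain ⟨w, hxw, hwy⟩ := exists_le_covby (lt_of_le_of_ne hxy hxyne)
      have hr : rk y = rk w + 1 := hrk.2 w y hwy
      obtain ⟨z, hz1, hz2, hz3⟩ := ih w hwy.lt hxw (by omega)
      exact ⟨z, hz1, hz2.trans hwy.lt.le, hz3⟩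

lemma card_up_mul {x y : α} (hxy : x ≠ y) {t : ℕ}
    (ht : ∀ z, x ⋖ z → z ≤ y → chainCount z y = t) :
    (univ.filter fun z => x ⋖ z ∧ z ≤ y).card * t = chainCount x y := by
  rw [chainCount_eq_sum_covby_left hxy]
  apply Eq.symm
  apply Finset.sum_const_nat
  intro z hz
  simp only [Finset.mem_filter, Finset.mem_univ, true_and] at hz
  exact ht z hz.1 hz.2

lemma card_down_mul {x y : α} (hxy : x ≠ y) {t : ℕ}
    (ht : ∀ w, x ≤ w → w ⋖ y → chainCount x w = t) :
    (univ.filter fun w => x ≤ w ∧ w ⋖ y).card * t = chainCount x y := by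
  rw [chainCount_eq_sum_covby_right hxy]
  apply Eq.symm
  apply Finset.sum_const_nat
  intro w hw
  simp only [Finset.mem_filter, Finset.mem_univ, true_and] at hw
  exact ht w hw.1 hw.2

lemma double_count {β γ : Type*} (s : Finset β) (t : Finset γ) (R : β → γ → Prop)
    [∀ b, DecidablePred (fun c => R b c)] [∀ c, DecidablePred (fun b => R b c)] :
    ∑ b ∈ s, (t.filter (fun c => R b c)).card = ∑ c ∈ t, (s.filter (fun b => R b c)).card := by
  simp only [Finset.card_filter]
  rw [Finset.sum_comm]

lemma filter_rank_card (hrk : IsRankFunction rk) {x y : α} {n : ℕ} (hr : rk y = rk x + n)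
    (P : ℕ → Prop) :
    (univ.filter fun z => x ≤ z ∧ z ≤ y ∧ P (rk z)).card
      = ∑ j ∈ (range (n+1)).filter (fun j => P (rk x + j)),
          (univ.filter fun z => x ≤ z ∧ z ≤ y ∧ rk z = rk x + j).card := by
  classical
  rw [Finset.card_eq_sum_card_fiberwise (f := fun z => rk z - rk x)
      (t := (range (n+1)).filter (fun j => P (rk x + j)))
      (fun z hz => by
        simp only [mem_coe, mem_filter, mem_univ, true_and] at hz ⊢
        have h1 : rk x ≤ rk z := rk_le_of_le hrk hz.1
        have h2 : rk z ≤ rk y := rk_le_of_le hrk hz.2.1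
        constructor
        · rw [mem_range]; omega
        · have he : rk x + (rk z - rk x) = rk z := by omega
          rw [he]; exact hz.2.2)]
  apply sum_congr rfl
  intro j hj
  simp only [mem_filter, mem_range] at hj
  congr 1
  ext z
  simp only [mem_filter, mem_univ, true_and]
  constructor
  · rintro ⟨⟨hz1, hz2, _⟩, hz4⟩
    have := rk_le_of_le hrk hz1
    exact ⟨hz1, hz2, by omega⟩
  · rintro ⟨hz1, hz2, hz3⟩
    exact ⟨⟨hz1, hz2, by rw [hz3]; exact hj.2⟩, by omega⟩

lemma ep_offsets (hrk : IsRankFunction rk) (hE : IsEulerian rk) {x y : α} (hlt : x < y)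
    {n : ℕ} (hr : rk y = rk x + n) :
    ∑ j ∈ (range (n+1)).filter (fun j => Even j),
        (univ.filter fun z => x ≤ z ∧ z ≤ y ∧ rk z = rk x + j).card
      = ∑ j ∈ (range (n+1)).filter (fun j => ¬ Even j),
          (univ.filter fun z => x ≤ z ∧ z ≤ y ∧ rk z = rk x + j).card := by
  have h := hE x y hlt
  have ha : (Finset.univ.filter fun z => x ≤ z ∧ z ≤ y ∧ Even (rk z)).card
      = ∑ j ∈ (range (n+1)).filter (fun j => Even (rk x + j)),
          (univ.filter fun z => x ≤ z ∧ z ≤ y ∧ rk z = rk x + j).card := by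
    have := filter_rank_card hrk hr (fun m => Even m)
    convert this using 2 <;> (ext z; simp)
  have hb : (Finset.univ.filter fun z => x ≤ z ∧ z ≤ y ∧ ¬ Even (rk z)).card
      = ∑ j ∈ (range (n+1)).filter (fun j => ¬ Even (rk x + j)),
          (univ.filter fun z => x ≤ z ∧ z ≤ y ∧ rk z = rk x + j).card := by
    have := filter_rank_card hrk hr (fun m => ¬ Even m)
    convert this using 2 <;> (ext z; simp)
  have key : ∑ j ∈ (range (n+1)).filter (fun j => Even (rk x + j)),
        (univ.filter fun z => x ≤ z ∧ z ≤ y ∧ rk z = rk x + j).card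
      = ∑ j ∈ (range (n+1)).filter (fun j => ¬ Even (rk x + j)),
        (univ.filter fun z => x ≤ z ∧ z ≤ y ∧ rk z = rk x + j).card := by
    rw [← ha, ← hb]
    have h3 : EulerPoincare rk x y := h
    unfold EulerPoincare at h3
    convert h3 using 2 <;> (ext z; simp)
  clear h
  have h := key
  rcases Nat.even_or_odd (rk x) with he | ho
  · have e1 : ((range (n+1)).filter (fun j => Even (rk x + j)))
        = ((range (n+1)).filter (fun j => Even j)) :=
      Finset.filter_congr (fun j _ => by simp [Nat.even_add, he])
    have e2 : ((range (n+1)).filter (fun j => ¬ Even (rk x + j)))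
        = ((range (n+1)).filter (fun j => ¬ Even j)) :=
      Finset.filter_congr (fun j _ => by simp [Nat.even_add, he])
    rw [e1, e2] at h
    exact h
  · have hne : ¬ Even (rk x) := by
      rw [Nat.even_iff]; rw [Nat.odd_iff] at ho; omega
    have e1 : ((range (n+1)).filter (fun j => Even (rk x + j)))
        = ((range (n+1)).filter (fun j => ¬ Even j)) :=
      Finset.filter_congr (fun j _ => by simp [Nat.even_add, hne])
    have e2 : ((range (n+1)).filter (fun j => ¬ Even (rk x + j)))
        = ((range (n+1)).filter (fun j => Even j)) :=
      Finset.filter_congr (fun j _ => by simp [Nat.even_add, hne])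
    rw [e1, e2] at h
    exact h.symm

end RankLemmas

section Intervals
variable [Fintype α] [OrderBot α] {rk : α → ℕ}

lemma lev_self (hrk : IsRankFunction rk) {x y : α} (hle : x ≤ y) :
    (univ.filter fun z => x ≤ z ∧ z ≤ y ∧ rk z = rk x + 0) = {x} := by
  ext z
  simp only [mem_filter, mem_univ, true_and, mem_singleton, add_zero]
  constructor
  · rintro ⟨h1, _, h3⟩
    exact (eq_of_le_of_rk_ge hrk h1 (le_of_eq h3)).symm
  · rintro rfl
    exact ⟨le_refl _, hle, rfl⟩

lemma lev_top (hrk : IsRankFunction rk) {x y : α} {n : ℕ} (hle : x ≤ y)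
    (hr : rk y = rk x + n) :
    (univ.filter fun z => x ≤ z ∧ z ≤ y ∧ rk z = rk x + n) = {y} := by
  ext z
  simp only [mem_filter, mem_univ, true_and, mem_singleton]
  constructor
  · rintro ⟨_, h2, h3⟩
    exact eq_of_le_of_rk_ge hrk h2 (by omega)
  · rintro rfl
    exact ⟨hle, le_refl _, hr⟩

lemma diamond_up_set (hrk : IsRankFunction rk) {x y : α} (hlt : x < y)
    (hr : rk y = rk x + 2) :
    (univ.filter fun z => x ⋖ z ∧ z ≤ y)
      = (univ.filter fun z => x ≤ z ∧ z ≤ y ∧ rk z = rk x + 1) := by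
  ext z
  simp only [mem_filter, mem_univ, true_and]
  constructor
  · rintro ⟨h1, h2⟩
    exact ⟨h1.lt.le, h2, hrk.2 x z h1⟩
  · rintro ⟨h1, h2, h3⟩
    have hxz : x < z := lt_of_le_of_rk_lt hrk h1 (by omega)
    exact ⟨covby_of_lt_rk hrk hxz h3, h2⟩

lemma diamond_down_set (hrk : IsRankFunction rk) {x y : α} (hlt : x < y)
    (hr : rk y = rk x + 2) :
    (univ.filter fun w => x ≤ w ∧ w ⋖ y)
      = (univ.filter fun z => x ≤ z ∧ z ≤ y ∧ rk z = rk x + 1) := by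
  ext w
  simp only [mem_filter, mem_univ, true_and]
  constructor
  · rintro ⟨h1, h2⟩
    have := hrk.2 w y h2
    exact ⟨h1, h2.lt.le, by omega⟩
  · rintro ⟨h1, h2, h3⟩
    have hwy : w < y := lt_of_le_of_rk_lt hrk h2 (by omega)
    exact ⟨h1, covby_of_lt_rk hrk hwy (by omega)⟩

lemma ep_two (hrk : IsRankFunction rk) (hE : IsEulerian rk) {x y : α} (hlt : x < y)
    (hr : rk y = rk x + 2) :
    (univ.filter fun z => x ≤ z ∧ z ≤ y ∧ rk z = rk x + 1).card = 2 := by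
  have h := ep_offsets hrk hE hlt hr
  have hev : ((range (2+1)).filter (fun j => Even j)) = {0, 2} := by
    ext j
    simp only [mem_filter, mem_range, mem_insert, mem_singleton, Nat.even_iff]
    omega
  have hod : ((range (2+1)).filter (fun j => ¬ Even j)) = {1} := by
    ext j
    simp only [mem_filter, mem_range, mem_singleton, Nat.even_iff]
    omega
  rw [hev, hod, Finset.sum_pair (by norm_num), Finset.sum_singleton,
      lev_self hrk hlt.le, lev_top hrk hlt.le hr] at h
  simp only [Finset.card_singleton] at h
  omega

lemma ep_four (hrk : IsRankFunction rk) (hE : IsEulerian rk) {x y : α} (hlt : x < y)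
    (hr : rk y = rk x + 4) :
    2 + (univ.filter fun z => x ≤ z ∧ z ≤ y ∧ rk z = rk x + 2).card
      = (univ.filter fun z => x ≤ z ∧ z ≤ y ∧ rk z = rk x + 1).card
        + (univ.filter fun z => x ≤ z ∧ z ≤ y ∧ rk z = rk x + 3).card := by
  have h := ep_offsets hrk hE hlt hr
  have hev : ((range (4+1)).filter (fun j => Even j)) = {0, 2, 4} := by
    ext j
    simp only [mem_filter, mem_range, mem_insert, mem_singleton, Nat.even_iff]
    omega
  have hod : ((range (4+1)).filter (fun j => ¬ Even j)) = {1, 3} := by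
    ext j
    simp only [mem_filter, mem_range, mem_insert, mem_singleton, Nat.even_iff]
    omega
  rw [hev, hod] at h
  rw [Finset.sum_insert (by decide), Finset.sum_pair (by norm_num),
      Finset.sum_pair (by norm_num), lev_self hrk hlt.le, lev_top hrk hlt.le hr] at h
  simp only [Finset.card_singleton] at h
  omega

lemma ep_six (hrk : IsRankFunction rk) (hE : IsEulerian rk) {x y : α} (hlt : x < y)
    (hr : rk y = rk x + 6) :
    2 + (univ.filter fun z => x ≤ z ∧ z ≤ y ∧ rk z = rk x + 2).card
      + (univ.filter fun z => x ≤ z ∧ z ≤ y ∧ rk z = rk x + 4).card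
      = (univ.filter fun z => x ≤ z ∧ z ≤ y ∧ rk z = rk x + 1).card
        + (univ.filter fun z => x ≤ z ∧ z ≤ y ∧ rk z = rk x + 3).card
        + (univ.filter fun z => x ≤ z ∧ z ≤ y ∧ rk z = rk x + 5).card := by
  have h := ep_offsets hrk hE hlt hr
  have hev : ((range (6+1)).filter (fun j => Even j)) = {0, 2, 4, 6} := by
    ext j
    simp only [mem_filter, mem_range, mem_insert, mem_singleton, Nat.even_iff]
    omega
  have hod : ((range (6+1)).filter (fun j => ¬ Even j)) = {1, 3, 5} := by
    ext j
    simp only [mem_filter, mem_range, mem_insert, mem_singleton, Nat.even_iff]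
    omega
  rw [hev, hod] at h
  rw [Finset.sum_insert (by decide), Finset.sum_insert (by decide),
      Finset.sum_pair (by norm_num), Finset.sum_insert (by decide),
      Finset.sum_pair (by norm_num), lev_self hrk hlt.le, lev_top hrk hlt.le hr] at h
  simp only [Finset.card_singleton] at h
  omega

lemma chainCount_rank1 (hrk : IsRankFunction rk) {x y : α} (hlt : x < y)
    (hr : rk y = rk x + 1) : chainCount x y = 1 := by
  have hcov : x ⋖ y := covby_of_lt_rk hrk hlt hr
  rw [chainCount_eq_sum_covby_left hlt.ne]
  have hset : (univ.filter fun z => x ⋖ z ∧ z ≤ y) = {y} := by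
    ext z
    simp only [mem_filter, mem_univ, true_and, mem_singleton]
    constructor
    · rintro ⟨h1, h2⟩
      rcases eq_or_lt_of_le h2 with rfl | hzy
      · rfl
      · exact absurd hzy (hcov.2 h1.lt)
    · rintro rfl
      exact ⟨hcov, le_refl _⟩
  rw [hset, Finset.sum_singleton, chainCount_self]

lemma chainCount_rank2 (hrk : IsRankFunction rk) (hE : IsEulerian rk) {x y : α}
    (hlt : x < y) (hr : rk y = rk x + 2) : chainCount x y = 2 := by
  have hmul := card_up_mul (x := x) (y := y) hlt.ne (t := 1) (fun z hz1 hz2 => by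
    have h3 : rk z = rk x + 1 := hrk.2 x z hz1
    have hzy : z < y := lt_of_le_of_rk_lt hrk hz2 (by omega)
    exact chainCount_rank1 hrk hzy (by omega))
  rw [diamond_up_set hrk hlt hr, ep_two hrk hE hlt hr] at hmul
  omega

end Intervals

section Rank4
variable [Fintype α] [OrderBot α] {rk : α → ℕ} {B D : ℕ → ℕ}

lemma card_pair' {a b : α} (hab : a ≠ b) : ({a, b} : Finset α).card = 2 := by
  classical
  rw [Finset.card_insert_of_notMem (by simp [hab]), Finset.card_singleton]

lemma card_triple {a b c : α} (hab : a ≠ b) (hac : a ≠ c) (hbc : b ≠ c) :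
    ({a, b, c} : Finset α).card = 3 := by
  classical
  rw [Finset.card_insert_of_notMem (by simp [hab, hac]),
      Finset.card_insert_of_notMem (by simp [hbc]), Finset.card_singleton]

lemma atoms_set_eq (hrk : IsRankFunction rk) {x y : α} :
    (univ.filter fun z => x ⋖ z ∧ z ≤ y)
      = (univ.filter fun z => x ≤ z ∧ z ≤ y ∧ rk z = rk x + 1) := by
  ext z
  simp only [mem_filter, mem_univ, true_and]
  constructor
  · rintro ⟨h1, h2⟩
    exact ⟨h1.lt.le, h2, hrk.2 x z h1⟩
  · rintro ⟨h1, h2, h3⟩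
    exact ⟨covby_of_lt_rk hrk (lt_of_le_of_rk_lt hrk h1 (by omega)) h3, h2⟩

lemma coatoms_set_eq (hrk : IsRankFunction rk) {x y : α} {m : ℕ}
    (hr : rk y = rk x + m + 1) :
    (univ.filter fun w => x ≤ w ∧ w ⋖ y)
      = (univ.filter fun z => x ≤ z ∧ z ≤ y ∧ rk z = rk x + m) := by
  ext w
  simp only [mem_filter, mem_univ, true_and]
  constructor
  · rintro ⟨h1, h2⟩
    have := hrk.2 w y h2
    exact ⟨h1, h2.lt.le, by omega⟩
  · rintro ⟨h1, h2, h3⟩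
    exact ⟨h1, covby_of_lt_rk hrk (lt_of_le_of_rk_lt hrk h2 (by omega)) (by omega)⟩

lemma covcov_set_eq (hrk : IsRankFunction rk) {x f : α} (hr : rk f = rk x + 2) :
    (univ.filter fun a => x ⋖ a ∧ a ⋖ f)
      = (univ.filter fun z => x ≤ z ∧ z ≤ f ∧ rk z = rk x + 1) := by
  ext a
  simp only [mem_filter, mem_univ, true_and]
  constructor
  · rintro ⟨h1, h2⟩
    exact ⟨h1.lt.le, h2.lt.le, hrk.2 x a h1⟩
  · rintro ⟨h1, h2, h3⟩
    refine ⟨covby_of_lt_rk hrk (lt_of_le_of_rk_lt hrk h1 (by omega)) h3, ?_⟩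
    exact covby_of_lt_rk hrk (lt_of_le_of_rk_lt hrk h2 (by omega)) (by omega)

/-- In a rank-3 binomial interval `[x,g]` the interval `[x,g]` has exactly 3 atoms. -/
lemma rank3_atom_card (hrk : IsRankFunction rk) (hE : IsEulerian rk)
    (hS : IsSheffer rk B D) (hB3 : B 3 = 6) {x g : α} (hx : x ≠ ⊥) (hxg : x < g)
    (hrg : rk g = rk x + 3) :
    (univ.filter fun a => x ⋖ a ∧ a ≤ g).card = 3 := by
  have hmul := card_up_mul (x := x) (y := g) hxg.ne (t := 2) (fun a ha1 ha2 => by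
    have hra : rk a = rk x + 1 := hrk.2 x a ha1
    exact chainCount_rank2 hrk hE (lt_of_le_of_rk_lt hrk ha2 (by omega)) (by omega))
  have hcc : chainCount x g = 6 := by
    rw [hS.2 x g hx hxg.le, show rk g - rk x = 3 by omega, hB3]
  omega

/-- No "digons": in a rank-3 binomial interval, two distinct elements of rank 2
cannot both cover the same two atoms. -/
lemma rank3_no_digon (hrk : IsRankFunction rk) (hE : IsEulerian rk)
    (hS : IsSheffer rk B D) (hB3 : B 3 = 6) {x g e e' f f' : α}
    (hx : x ≠ ⊥) (hxg : x < g) (hrg : rk g = rk x + 3)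
    (hee : e ≠ e') (hff : f ≠ f')
    (hxe : x ⋖ e) (hxe' : x ⋖ e')
    (hef : e ⋖ f) (he'f : e' ⋖ f) (hef' : e ⋖ f') (he'f' : e' ⋖ f')
    (hfg : f ≤ g) (hf'g : f' ≤ g) : False := by
  classical
  have hre : rk e = rk x + 1 := hrk.2 x e hxe
  have hre' : rk e' = rk x + 1 := hrk.2 x e' hxe'
  have hrf : rk f = rk x + 2 := by have := hrk.2 e f hef; omega
  have hrf' : rk f' = rk x + 2 := by have := hrk.2 e f' hef'; omega
  set Ag := univ.filter fun a => x ⋖ a ∧ a ≤ g with hAg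
  have hAcard : Ag.card = 3 := rank3_atom_card hrk hE hS hB3 hx hxg hrg
  have heg : e ≤ g := (hef.lt.le).trans hfg
  have he'g : e' ≤ g := (he'f.lt.le).trans hfg
  have heA : e ∈ Ag := by simp [hAg, hxe, heg]
  have he'A : e' ∈ Ag := by simp [hAg, hxe', he'g]
  -- a third atom
  obtain ⟨e'', he''A, he''1, he''2⟩ : ∃ e'' ∈ Ag, e'' ≠ e ∧ e'' ≠ e' := by
    by_contra hcon
    push_neg at hcon
    have hsub : Ag ⊆ {e, e'} := by
      intro a ha
      rcases em (a = e) with rfl | h1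
      · simp
      rcases em (a = e') with rfl | h2
      · simp
      · exact absurd (hcon a ha h1) h2
    have := Finset.card_le_card hsub
    have h2 : ({e, e'} : Finset α).card ≤ 2 :=
      (Finset.card_insert_le _ _).trans (by simp)
    omega
  simp only [hAg, mem_filter, mem_univ, true_and] at he''A
  obtain ⟨hxe'', he''g⟩ := he''A
  have hre'' : rk e'' = rk x + 1 := hrk.2 x e'' hxe''
  -- a middle element of [e'', g]
  have hmidcard : (univ.filter fun h => e'' ⋖ h ∧ h ≤ g).card = 2 := by
    rw [diamond_up_set hrk (lt_of_le_of_rk_lt hrk he''g (by omega)) (by omega)]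
    exact ep_two hrk hE (lt_of_le_of_rk_lt hrk he''g (by omega)) (by omega)
  obtain ⟨h0, hh0⟩ : ∃ h0, e'' ⋖ h0 ∧ h0 ≤ g := by
    have : (univ.filter fun h => e'' ⋖ h ∧ h ≤ g).Nonempty := by
      rw [← Finset.card_pos, hmidcard]; norm_num
    obtain ⟨h0, hm⟩ := this
    simp only [mem_filter, mem_univ, true_and] at hm
    exact ⟨h0, hm⟩
  have hrh0 : rk h0 = rk x + 2 := by have := hrk.2 e'' h0 hh0.1; omega
  have hxh0 : x < h0 := lt_of_lt_of_le hxe''.lt hh0.1.lt.le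
  -- the other atom under h0
  set Mh := univ.filter fun a => x ≤ a ∧ a ≤ h0 ∧ rk a = rk x + 1 with hMh
  have hMhcard : Mh.card = 2 := ep_two hrk hE hxh0 (by omega)
  have he''Mh : e'' ∈ Mh := by
    simp [hMh, hxe''.lt.le, hh0.1.lt.le, hre'']
  obtain ⟨a, haMh, hane⟩ : ∃ a ∈ Mh, a ≠ e'' := by
    by_contra hcon
    push_neg at hcon
    have hsub : Mh ⊆ {e''} := fun b hb => by simp [hcon b hb]
    have := Finset.card_le_card hsub
    simp at this
    omega
  simp only [hMh, mem_filter, mem_univ, true_and] at haMh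
  obtain ⟨hxa, hah0, hra⟩ := haMh
  have hxac : x ⋖ a := covby_of_lt_rk hrk (lt_of_le_of_rk_lt hrk hxa (by omega)) hra
  have hah0c : a ⋖ h0 := covby_of_lt_rk hrk (lt_of_le_of_rk_lt hrk hah0 (by omega)) (by omega)
  -- Ag = {e, e', e''}
  have hAgeq : Ag = {e, e', e''} := by
    apply Eq.symm
    apply Finset.eq_of_subset_of_card_le
    · intro b hb
      simp only [mem_insert, mem_singleton] at hb
      rcases hb with rfl | rfl | rfl
      · exact heA
      · exact he'A
      · simp [hAg, hxe'', he''g]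
    · rw [hAcard, card_triple hee (Ne.symm he''1) (Ne.symm he''2)]
  have haA : a ∈ Ag := by simp [hAg, hxac, hah0.trans hh0.2]
  rw [hAgeq] at haA
  simp only [mem_insert, mem_singleton] at haA
  -- covers of an atom (below both f,f') within g are exactly {f, f'}
  have hMe : ∀ b, x ⋖ b → b ≤ g → b ⋖ f → b ⋖ f' →
      ∀ h, b ⋖ h → h ≤ g → h = f ∨ h = f' := by
    intro b hxb hbg hbf hbf' h hbh hhg
    have hrb : rk b = rk x + 1 := hrk.2 x b hxb
    have hbltg : b < g := lt_of_le_of_rk_lt hrk hbg (by omega)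
    have hcard2 : (univ.filter fun h => b ⋖ h ∧ h ≤ g).card = 2 := by
      rw [diamond_up_set hrk hbltg (by omega)]
      exact ep_two hrk hE hbltg (by omega)
    have hset : (univ.filter fun h => b ⋖ h ∧ h ≤ g) = {f, f'} := by
      apply Eq.symm
      apply Finset.eq_of_subset_of_card_le
      · intro c hc
        simp only [mem_insert, mem_singleton] at hc
        rcases hc with rfl | rfl
        · simp [hbf, hfg]
        · simp [hbf', hf'g]
      · rw [hcard2, card_pair' hff]
    have : h ∈ ({f, f'} : Finset α) := by rw [← hset]; simp [hbh, hhg]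
    simpa using this
  -- conclude h0 ∈ {f, f'}
  have hh0ff' : h0 = f ∨ h0 = f' := by
    rcases haA with rfl | rfl | rfl
    · exact hMe a hxac (hah0.trans hh0.2) hef hef' h0 hah0c hh0.2
    · exact hMe a hxac (hah0.trans hh0.2) he'f he'f' h0 hah0c hh0.2
    · exact absurd rfl hane
  -- then e, e', e'' are three distinct atoms below h0, but [x,h0] has only 2
  have heh0 : e ≤ h0 := by
    rcases hh0ff' with rfl | rfl
    · exact hef.lt.le
    · exact hef'.lt.le
  have he'h0 : e' ≤ h0 := by
    rcases hh0ff' with rfl | rfl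
    · exact he'f.lt.le
    · exact he'f'.lt.le
  have hsub : ({e, e', e''} : Finset α) ⊆ Mh := by
    intro b hb
    simp only [mem_insert, mem_singleton] at hb
    rcases hb with rfl | rfl | rfl
    · simp [hMh, hxe.lt.le, heh0, hre]
    · simp [hMh, hxe'.lt.le, he'h0, hre']
    · exact he''Mh
  have hle := Finset.card_le_card hsub
  rw [hMhcard, card_triple hee (Ne.symm he''1) (Ne.symm he''2)] at hle
  omega

end Rank4

section Rank4B
variable [Fintype α] [OrderBot α] {rk : α → ℕ} {B D : ℕ → ℕ}

/-- Rank-4 binomial intervals: `chainCount = 24`, `4` atoms, `4` coatoms, `6` middles. -/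
lemma rank4_binomial (hrk : IsRankFunction rk) (hE : IsEulerian rk)
    (hS : IsSheffer rk B D) (hB3 : B 3 = 6) {x y : α}
    (hx : x ≠ ⊥) (hlt : x < y) (hr : rk y = rk x + 4) :
    chainCount x y = 24
    ∧ (univ.filter fun z => x ⋖ z ∧ z ≤ y).card = 4
    ∧ (univ.filter fun w => x ≤ w ∧ w ⋖ y).card = 4
    ∧ (univ.filter fun z => x ≤ z ∧ z ≤ y ∧ rk z = rk x + 2).card = 6 := by
  classical
  set A := univ.filter fun z => x ⋖ z ∧ z ≤ y with hA
  set C := univ.filter fun w => x ≤ w ∧ w ⋖ y with hC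
  set M := univ.filter fun z => x ≤ z ∧ z ≤ y ∧ rk z = rk x + 2 with hM
  have hA6 : A.card * 6 = chainCount x y := by
    apply card_up_mul hlt.ne
    intro z hz1 hz2
    have hrz : rk z = rk x + 1 := hrk.2 x z hz1
    rw [hS.2 z y (ne_bot_of_gt hz1.lt) hz2, show rk y - rk z = 3 by omega, hB3]
  have hC6 : C.card * 6 = chainCount x y := by
    apply card_down_mul hlt.ne
    intro w hw1 hw2
    have hrw : rk w = rk x + 3 := by have := hrk.2 w y hw2; omega
    rw [hS.2 x w hx hw1, show rk w - rk x = 3 by omega, hB3]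
  -- flag count between atoms and middles
  have hkey := double_count A M (fun a m => a ⋖ m)
  have hperA : ∀ a ∈ A, (M.filter (fun m => a ⋖ m)).card = 3 := by
    intro a ha
    simp only [hA, mem_filter, mem_univ, true_and] at ha
    have hra : rk a = rk x + 1 := hrk.2 x a ha.1
    have hset : M.filter (fun m => a ⋖ m) = univ.filter (fun m => a ⋖ m ∧ m ≤ y) := by
      ext m
      simp only [hM, mem_filter, mem_univ, true_and]
      constructor
      · rintro ⟨⟨_, h2, _⟩, h4⟩
        exact ⟨h4, h2⟩
      · rintro ⟨h1, h2⟩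
        have := hrk.2 a m h1
        exact ⟨⟨ha.1.lt.le.trans h1.lt.le, h2, by omega⟩, h1⟩
    rw [hset]
    have hmul := card_up_mul (x := a) (y := y)
      (fun he => by rw [he] at hra; omega) (t := 2) (fun m hm1 hm2 => by
        have hrm : rk m = rk x + 2 := by have := hrk.2 a m hm1; omega
        exact chainCount_rank2 hrk hE (lt_of_le_of_rk_lt hrk hm2 (by omega)) (by omega))
    have hcca : chainCount a y = 6 := by
      rw [hS.2 a y (ne_bot_of_gt ha.1.lt) ha.2, show rk y - rk a = 3 by omega, hB3]
    omega
  have hperM : ∀ m ∈ M, (A.filter (fun a => a ⋖ m)).card = 2 := by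
    intro m hm
    simp only [hM, mem_filter, mem_univ, true_and] at hm
    obtain ⟨hm1, hm2, hm3⟩ := hm
    have hxm : x < m := lt_of_le_of_rk_lt hrk hm1 (by omega)
    have hset : A.filter (fun a => a ⋖ m)
        = univ.filter (fun a => x ≤ a ∧ a ≤ m ∧ rk a = rk x + 1) := by
      ext a
      simp only [hA, mem_filter, mem_univ, true_and]
      constructor
      · rintro ⟨⟨h1, _⟩, h3⟩
        exact ⟨h1.lt.le, h3.lt.le, hrk.2 x a h1⟩
      · rintro ⟨h1, h2, h3⟩
        have hxa : x ⋖ a := covby_of_lt_rk hrk (lt_of_le_of_rk_lt hrk h1 (by omega)) h3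
        have ham : a ⋖ m := covby_of_lt_rk hrk (lt_of_le_of_rk_lt hrk h2 (by omega)) (by omega)
        exact ⟨⟨hxa, h2.trans hm2⟩, ham⟩
    rw [hset]
    exact ep_two hrk hE hxm (by omega)
  rw [Finset.sum_congr rfl hperA, Finset.sum_congr rfl hperM,
      Finset.sum_const, Finset.sum_const, smul_eq_mul, smul_eq_mul] at hkey
  -- Euler-Poincaré
  have hEP := ep_four hrk hE hlt hr
  have hArw : (univ.filter fun z => x ≤ z ∧ z ≤ y ∧ rk z = rk x + 1).card = A.card := by
    rw [hA, atoms_set_eq hrk]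
  have hCrw : (univ.filter fun z => x ≤ z ∧ z ≤ y ∧ rk z = rk x + 3).card = C.card := by
    rw [hC, coatoms_set_eq hrk (show rk y = rk x + 3 + 1 by omega)]
  rw [hArw, hCrw] at hEP
  have hMrw : (univ.filter fun z => x ≤ z ∧ z ≤ y ∧ rk z = rk x + 2) = M := by
    ext z; simp [hM]
  rw [hMrw] at hEP
  refine ⟨?_, ?_, ?_, ?_⟩ <;> omega

/-- Unique join (uniqueness): in a rank-4 binomial interval, two distinct atoms
have at most one common cover inside the interval. -/
lemma rank4_join_unique (hrk : IsRankFunction rk) (hE : IsEulerian rk)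
    (hS : IsSheffer rk B D) (hB3 : B 3 = 6) {x y e e' : α}
    (hx : x ≠ ⊥) (hr : rk y = rk x + 4)
    (hxe : x ⋖ e) (hey : e ≤ y) (hxe' : x ⋖ e') (he'y : e' ≤ y) (hne : e ≠ e')
    {f f' : α} (hf : e ⋖ f ∧ e' ⋖ f ∧ f ≤ y) (hf' : e ⋖ f' ∧ e' ⋖ f' ∧ f' ≤ y) :
    f = f' := by
  classical
  obtain ⟨hf1, hf2, hf3⟩ := hf
  obtain ⟨hf1', hf2', hf3'⟩ := hf'
  by_contra hff
  have hre : rk e = rk x + 1 := hrk.2 x e hxe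
  have hrf : rk f = rk x + 2 := by have := hrk.2 e f hf1; omega
  have hrf' : rk f' = rk x + 2 := by have := hrk.2 e f' hf1'; omega
  set Te := univ.filter fun g => e ≤ g ∧ g ⋖ y with hTe
  set Tf := univ.filter fun g => f ≤ g ∧ g ⋖ y with hTf
  set Tf' := univ.filter fun g => f' ≤ g ∧ g ⋖ y with hTf'
  have hTecard : Te.card = 3 := by
    have hmul := card_down_mul (x := e) (y := y)
      (fun he2 => by rw [he2] at hre; omega) (t := 2) (fun g hg1 hg2 => by
        have hrg : rk g = rk x + 3 := by have := hrk.2 g y hg2; omega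
        exact chainCount_rank2 hrk hE (lt_of_le_of_rk_lt hrk hg1 (by omega)) (by omega))
    have hcce : chainCount e y = 6 := by
      rw [hS.2 e y (ne_bot_of_gt hxe.lt) hey, show rk y - rk e = 3 by omega, hB3]
    rw [hTe]; omega
  have hTfcard : Tf.card = 2 := by
    rw [hTf, coatoms_set_eq hrk (show rk y = rk f + 1 + 1 by omega)]
    exact ep_two hrk hE (show f < y from lt_of_le_of_rk_lt hrk hf3 (by omega))
      (show rk y = rk f + 2 by omega)
  have hTf'card : Tf'.card = 2 := by
    rw [hTf', coatoms_set_eq hrk (show rk y = rk f' + 1 + 1 by omega)]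
    exact ep_two hrk hE (show f' < y from lt_of_le_of_rk_lt hrk hf3' (by omega))
      (show rk y = rk f' + 2 by omega)
  have hsub : Tf ∪ Tf' ⊆ Te := by
    intro g hg
    simp only [hTf, hTf', hTe, Finset.mem_union, mem_filter, mem_univ, true_and] at hg ⊢
    rcases hg with ⟨h1, h2⟩ | ⟨h1, h2⟩
    · exact ⟨hf1.lt.le.trans h1, h2⟩
    · exact ⟨hf1'.lt.le.trans h1, h2⟩
  have hdisj : Disjoint Tf Tf' := by
    rw [Finset.disjoint_left]
    intro g hg hg'
    simp only [hTf, hTf', mem_filter, mem_univ, true_and] at hg hg'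
    have hrg : rk g = rk x + 3 := by have := hrk.2 g y hg.2; omega
    exact rank3_no_digon hrk hE hS hB3 hx (hxe.lt.trans (hf1.lt.trans_le hg.1))
      hrg hne hff hxe hxe' hf1 hf2 hf1' hf2' hg.1 hg'.1
  have := Finset.card_le_card hsub
  rw [Finset.card_union_of_disjoint hdisj, hTecard, hTfcard, hTf'card] at this
  omega

/-- Unique join (existence). -/
lemma rank4_join_exists (hrk : IsRankFunction rk) (hE : IsEulerian rk)
    (hS : IsSheffer rk B D) (hB3 : B 3 = 6) {x y e e' : α}
    (hx : x ≠ ⊥) (hr : rk y = rk x + 4)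
    (hxe : x ⋖ e) (hey : e ≤ y) (hxe' : x ⋖ e') (he'y : e' ≤ y) (hne : e ≠ e') :
    ∃ f, e ⋖ f ∧ e' ⋖ f ∧ f ≤ y := by
  classical
  have hlt : x < y := hxe.lt.trans_le hey
  obtain ⟨hcc, hAcard, hCcard, hMcard⟩ := rank4_binomial hrk hE hS hB3 hx hlt hr
  set A := univ.filter fun z => x ⋖ z ∧ z ≤ y with hA
  set M := univ.filter fun z => x ≤ z ∧ z ≤ y ∧ rk z = rk x + 2 with hM
  have hφmem : ∀ f ∈ M, (univ.filter fun a => x ⋖ a ∧ a ⋖ f) ∈ A.powersetCard 2 := by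
    intro f hf
    simp only [hM, mem_filter, mem_univ, true_and] at hf
    obtain ⟨hf1, hf2, hf3⟩ := hf
    rw [Finset.mem_powersetCard]
    constructor
    · intro a ha
      simp only [mem_filter, mem_univ, true_and] at ha
      simp only [hA, mem_filter, mem_univ, true_and]
      exact ⟨ha.1, ha.2.lt.le.trans hf2⟩
    · rw [covcov_set_eq hrk hf3]
      exact ep_two hrk hE (lt_of_le_of_rk_lt hrk hf1 (by omega)) (by omega)
  have hinj : ∀ f f', f ∈ M → f' ∈ M →
      (univ.filter fun a => x ⋖ a ∧ a ⋖ f) = (univ.filter fun a => x ⋖ a ∧ a ⋖ f') →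
        f = f' := by
    intro f f' hfm hfm' heq
    simp only [hM, mem_filter, mem_univ, true_and] at hfm hfm'
    have hcard : (univ.filter fun a => x ⋖ a ∧ a ⋖ f).card = 2 := by
      rw [covcov_set_eq hrk hfm.2.2]
      exact ep_two hrk hE (lt_of_le_of_rk_lt hrk hfm.1 (by omega)) (by omega)
    have h2 : 1 < (univ.filter fun a => x ⋖ a ∧ a ⋖ f).card := by rw [hcard]; norm_num
    obtain ⟨a, ha, b, hb, hab⟩ := Finset.one_lt_card.mp h2
    have ha' := heq ▸ ha
    have hb' := heq ▸ hb
    simp only [mem_filter, mem_univ, true_and] at ha hb ha' hb'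
    exact rank4_join_unique hrk hE hS hB3 hx hr ha.1 (ha.2.lt.le.trans hfm.2.1)
      hb.1 (hb.2.lt.le.trans hfm.2.1) hab
      ⟨ha.2, hb.2, hfm.2.1⟩ ⟨ha'.2, hb'.2, hfm'.2.1⟩
  have hcardle : (A.powersetCard 2).card ≤ M.card := by
    rw [Finset.card_powersetCard, hAcard, hMcard]
    decide
  have hpair : ({e, e'} : Finset α) ∈ A.powersetCard 2 := by
    rw [Finset.mem_powersetCard]
    constructor
    · intro a ha
      simp only [mem_insert, mem_singleton] at ha
      rcases ha with rfl | rfl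
      · simp [hA, hxe, hey]
      · simp [hA, hxe', he'y]
    · exact card_pair' hne
  obtain ⟨f, hfM, hfeq⟩ := Finset.surj_on_of_inj_on_of_card_le
    (fun f _ => univ.filter fun a => x ⋖ a ∧ a ⋖ f) hφmem hinj hcardle _ hpair
  have he1 : e ∈ univ.filter fun a => x ⋖ a ∧ a ⋖ f := by rw [← hfeq]; simp
  have he2 : e' ∈ univ.filter fun a => x ⋖ a ∧ a ⋖ f := by rw [← hfeq]; simp
  simp only [mem_filter, mem_univ, true_and] at he1 he2
  simp only [hM, mem_filter, mem_univ, true_and] at hfM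
  exact ⟨f, he1.2, he2.2, hfM.2.1⟩

end Rank4B

section Rank4S
variable [Fintype α] [OrderBot α] {rk : α → ℕ} {B D : ℕ → ℕ}

/-- Rank-4 Sheffer intervals `[⊥,g]` have 120 maximal chains. -/
lemma rank4_sheffer (hrk : IsRankFunction rk) (hE : IsEulerian rk)
    (hS : IsSheffer rk B D) (hB3 : B 3 = 6) (hD3 : D 3 = 10) {g : α}
    (hg : rk g = 4) : chainCount ⊥ g = 120 := by
  classical
  have hbot0 : rk (⊥ : α) = 0 := hrk.1
  have hbg : (⊥ : α) < g := lt_of_le_of_rk_lt hrk bot_le (by omega)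
  set A := univ.filter fun a => (⊥ : α) ⋖ a ∧ a ≤ g with hA
  set C := univ.filter fun c => (⊥ : α) ≤ c ∧ c ⋖ g with hC
  set M := univ.filter fun z => (⊥ : α) ≤ z ∧ z ≤ g ∧ rk z = rk (⊥ : α) + 2 with hM
  have hA6 : A.card * 6 = chainCount ⊥ g := by
    apply card_up_mul hbg.ne
    intro a ha1 ha2
    have hra : rk a = 1 := by have := hrk.2 ⊥ a ha1; omega
    rw [hS.2 a g (ne_bot_of_gt ha1.lt) ha2, show rk g - rk a = 3 by omega, hB3]
  have hC10 : C.card * 10 = chainCount ⊥ g := by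
    apply card_down_mul hbg.ne
    intro c _ hc2
    have hrc : rk c = 3 := by have := hrk.2 c g hc2; omega
    rw [hS.1 c, hrc, hD3]
  -- flags between atoms and middles
  have hkey := double_count A M (fun a m => a ⋖ m)
  have hperA : ∀ a ∈ A, (M.filter (fun m => a ⋖ m)).card = 3 := by
    intro a ha
    simp only [hA, mem_filter, mem_univ, true_and] at ha
    have hra : rk a = 1 := by have := hrk.2 ⊥ a ha.1; omega
    have hset : M.filter (fun m => a ⋖ m) = univ.filter (fun m => a ⋖ m ∧ m ≤ g) := by
      ext m
      simp only [hM, mem_filter, mem_univ, true_and]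
      constructor
      · rintro ⟨⟨_, h2, _⟩, h4⟩
        exact ⟨h4, h2⟩
      · rintro ⟨h1, h2⟩
        have := hrk.2 a m h1
        exact ⟨⟨bot_le, h2, by omega⟩, h1⟩
    rw [hset]
    have hmul := card_up_mul (x := a) (y := g)
      (fun he => by rw [he] at hra; omega) (t := 2) (fun m hm1 hm2 => by
        have hrm : rk m = 2 := by have := hrk.2 a m hm1; omega
        exact chainCount_rank2 hrk hE (lt_of_le_of_rk_lt hrk hm2 (by omega)) (by omega))
    have hcca : chainCount a g = 6 := by
      rw [hS.2 a g (ne_bot_of_gt ha.1.lt) ha.2, show rk g - rk a = 3 by omega, hB3]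
    omega
  have hperM : ∀ m ∈ M, (A.filter (fun a => a ⋖ m)).card = 2 := by
    intro m hm
    simp only [hM, mem_filter, mem_univ, true_and] at hm
    obtain ⟨_, hm2, hm3⟩ := hm
    have hbm : (⊥ : α) < m := lt_of_le_of_rk_lt hrk bot_le (by omega)
    have hset : A.filter (fun a => a ⋖ m)
        = univ.filter (fun a => (⊥:α) ≤ a ∧ a ≤ m ∧ rk a = rk (⊥:α) + 1) := by
      ext a
      simp only [hA, mem_filter, mem_univ, true_and]
      constructor
      · rintro ⟨⟨h1, _⟩, h3⟩
        exact ⟨bot_le, h3.lt.le, hrk.2 ⊥ a h1⟩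
      · rintro ⟨_, h2, h3⟩
        have hba : (⊥:α) ⋖ a := covby_of_lt_rk hrk (lt_of_le_of_rk_lt hrk bot_le (by omega)) h3
        have ham : a ⋖ m := covby_of_lt_rk hrk (lt_of_le_of_rk_lt hrk h2 (by omega)) (by omega)
        exact ⟨⟨hba, h2.trans hm2⟩, ham⟩
    rw [hset]
    exact ep_two hrk hE hbm (by omega)
  rw [Finset.sum_congr rfl hperA, Finset.sum_congr rfl hperM,
      Finset.sum_const, Finset.sum_const, smul_eq_mul, smul_eq_mul] at hkey
  -- flags between middles and coatoms
  have hkey2 := double_count M C (fun m c => m ⋖ c)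
  have hperM2 : ∀ m ∈ M, (C.filter (fun c => m ⋖ c)).card = 2 := by
    intro m hm
    simp only [hM, mem_filter, mem_univ, true_and] at hm
    obtain ⟨_, hm2, hm3⟩ := hm
    have hmg : m < g := lt_of_le_of_rk_lt hrk hm2 (by omega)
    have hset : C.filter (fun c => m ⋖ c) = univ.filter (fun c => m ⋖ c ∧ c ≤ g) := by
      ext c
      simp only [hC, mem_filter, mem_univ, true_and]
      constructor
      · rintro ⟨⟨_, h2⟩, h3⟩
        exact ⟨h3, h2.lt.le⟩
      · rintro ⟨h1, h2⟩
        have hrc : rk c = 3 := by have := hrk.2 m c h1; omega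
        exact ⟨⟨bot_le, covby_of_lt_rk hrk (lt_of_le_of_rk_lt hrk h2 (by omega)) (by omega)⟩, h1⟩
    rw [hset, diamond_up_set hrk hmg (by omega)]
    exact ep_two hrk hE hmg (by omega)
  have hperC : ∀ c ∈ C, (M.filter (fun m => m ⋖ c)).card = 5 := by
    intro c hc
    simp only [hC, mem_filter, mem_univ, true_and] at hc
    have hrc : rk c = 3 := by have := hrk.2 c g hc.2; omega
    have hbc : (⊥:α) < c := lt_of_le_of_rk_lt hrk bot_le (by omega)
    have hset : M.filter (fun m => m ⋖ c) = univ.filter (fun m => (⊥:α) ≤ m ∧ m ⋖ c) := by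
      ext m
      simp only [hM, mem_filter, mem_univ, true_and]
      constructor
      · rintro ⟨_, h2⟩
        exact ⟨bot_le, h2⟩
      · rintro ⟨_, h2⟩
        have hrm : rk m = 2 := by have := hrk.2 m c h2; omega
        exact ⟨⟨bot_le, h2.lt.le.trans hc.2.lt.le, by omega⟩, h2⟩
    rw [hset]
    have hmul := card_down_mul (x := (⊥:α)) (y := c) hbc.ne (t := 2) (fun m _ hm2 => by
      have hrm : rk m = 2 := by have := hrk.2 m c hm2; omega
      exact chainCount_rank2 hrk hE (lt_of_le_of_rk_lt hrk bot_le (by omega)) (by omega))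
    have hccc : chainCount ⊥ c = 10 := by rw [hS.1 c, hrc, hD3]
    omega
  rw [Finset.sum_congr rfl hperM2, Finset.sum_congr rfl hperC,
      Finset.sum_const, Finset.sum_const, smul_eq_mul, smul_eq_mul] at hkey2
  -- Euler-Poincaré
  have hEP := ep_four hrk hE hbg (show rk g = rk (⊥:α) + 4 by omega)
  have hArw : (univ.filter fun z => (⊥:α) ≤ z ∧ z ≤ g ∧ rk z = rk (⊥:α) + 1).card = A.card := by
    rw [hA, atoms_set_eq hrk]
  have hCrw : (univ.filter fun z => (⊥:α) ≤ z ∧ z ≤ g ∧ rk z = rk (⊥:α) + 3).card = C.card := by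
    rw [hC, coatoms_set_eq hrk (show rk g = rk (⊥:α) + 3 + 1 by omega)]
  rw [hArw, hCrw] at hEP
  have hMrw : (univ.filter fun z => (⊥:α) ≤ z ∧ z ≤ g ∧ rk z = rk (⊥:α) + 2) = M := by
    ext z; simp [hM]
  rw [hMrw] at hEP
  omega

end Rank4S

section Main
variable [Fintype α] [OrderBot α] {rk : α → ℕ} {B D : ℕ → ℕ}

lemma main_contra (hrk : IsRankFunction rk) (hE : IsEulerian rk)
    (hS : IsSheffer rk B D) (hB3 : B 3 = 6) (hD3 : D 3 = 10)
    {v : α} (hv6 : rk v = 6) : False := by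
  classical
  have hbot0 : rk (⊥ : α) = 0 := hrk.1
  have hbv : (⊥ : α) < v := lt_of_le_of_rk_lt hrk bot_le (by omega)
  set L1 := univ.filter fun z => (⊥:α) ≤ z ∧ z ≤ v ∧ rk z = rk (⊥:α) + 1 with hL1
  set L2 := univ.filter fun z => (⊥:α) ≤ z ∧ z ≤ v ∧ rk z = rk (⊥:α) + 2 with hL2
  set L3 := univ.filter fun z => (⊥:α) ≤ z ∧ z ≤ v ∧ rk z = rk (⊥:α) + 3 with hL3
  set L4 := univ.filter fun z => (⊥:α) ≤ z ∧ z ≤ v ∧ rk z = rk (⊥:α) + 4 with hL4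
  set L5 := univ.filter fun z => (⊥:α) ≤ z ∧ z ≤ v ∧ rk z = rk (⊥:α) + 5 with hL5
  -- chain counts of upper intervals
  have h24 : ∀ e : α, e ≤ v → rk e = 2 → chainCount e v = 24 := fun e h1 h2 =>
    (rank4_binomial hrk hE hS hB3 (fun he => by rw [he] at h2; omega)
      (lt_of_le_of_rk_lt hrk h1 (by omega)) (by omega)).1
  have hup4 : ∀ e : α, e ≤ v → rk e = 2 →
      (univ.filter fun f => e ⋖ f ∧ f ≤ v).card = 4 := fun e h1 h2 =>
    (rank4_binomial hrk hE hS hB3 (fun he => by rw [he] at h2; omega)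
      (lt_of_le_of_rk_lt hrk h1 (by omega)) (by omega)).2.1
  have hco4 : ∀ e : α, e ≤ v → rk e = 2 →
      (univ.filter fun w => e ≤ w ∧ w ⋖ v).card = 4 := fun e h1 h2 =>
    (rank4_binomial hrk hE hS hB3 (fun he => by rw [he] at h2; omega)
      (lt_of_le_of_rk_lt hrk h1 (by omega)) (by omega)).2.2.1
  -- an atom z0 and the constant k
  obtain ⟨z0, hz0c, hz0v⟩ := exists_covby_le hbv
  have hrz0 : rk z0 = 1 := by have := hrk.2 ⊥ z0 hz0c; omega
  have hz0b : z0 ≠ ⊥ := ne_bot_of_gt hz0c.lt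
  have hz0ltv : z0 < v := lt_of_le_of_rk_lt hrk hz0v (by omega)
  set k := (univ.filter fun w => z0 ≤ w ∧ w ⋖ v).card with hk
  have hB5 : B 5 = k * 24 := by
    have hmul := card_down_mul (x := z0) (y := v) hz0ltv.ne (t := 24) (fun w hw1 hw2 => by
      have hrw : rk w = 5 := by have := hrk.2 w v hw2; omega
      exact (rank4_binomial hrk hE hS hB3 hz0b
        (lt_of_le_of_rk_lt hrk hw1 (by omega)) (by omega)).1)
    have hcc : chainCount z0 v = B 5 := by
      rw [hS.2 z0 v hz0b hz0v, show rk v - rk z0 = 5 by omega]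
    rw [hcc] at hmul
    exact hmul.symm
  have hatomup : ∀ z, (⊥:α) ⋖ z → z ≤ v →
      (univ.filter fun e => z ⋖ e ∧ e ≤ v).card = k := by
    intro z hz1 hz2
    have hrz : rk z = 1 := by have := hrk.2 ⊥ z hz1; omega
    have hzb : z ≠ ⊥ := ne_bot_of_gt hz1.lt
    have hzv : z < v := lt_of_le_of_rk_lt hrk hz2 (by omega)
    have hmul := card_up_mul (x := z) (y := v) hzv.ne (t := 24) (fun e he1 he2 => by
      have hre : rk e = 2 := by have := hrk.2 z e he1; omega
      exact h24 e he2 hre)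
    have hcc : chainCount z v = B 5 := by
      rw [hS.2 z v hzb hz2, show rk v - rk z = 5 by omega]
    rw [hcc, hB5] at hmul
    exact Nat.eq_of_mul_eq_mul_right (by norm_num) hmul
  have hatomco : ∀ z, (⊥:α) ⋖ z → z ≤ v →
      (univ.filter fun w => z ≤ w ∧ w ⋖ v).card = k := by
    intro z hz1 hz2
    have hrz : rk z = 1 := by have := hrk.2 ⊥ z hz1; omega
    have hzb : z ≠ ⊥ := ne_bot_of_gt hz1.lt
    have hzv : z < v := lt_of_le_of_rk_lt hrk hz2 (by omega)
    have hmul := card_down_mul (x := z) (y := v) hzv.ne (t := 24) (fun w hw1 hw2 => by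
      have hrw : rk w = 5 := by have := hrk.2 w v hw2; omega
      exact (rank4_binomial hrk hE hS hB3 hzb
        (lt_of_le_of_rk_lt hrk hw1 (by omega)) (by omega)).1)
    have hcc : chainCount z v = B 5 := by
      rw [hS.2 z v hzb hz2, show rk v - rk z = 5 by omega]
    rw [hcc, hB5] at hmul
    exact Nat.eq_of_mul_eq_mul_right (by norm_num) hmul
  -- a coatom w0 and the constant c
  obtain ⟨w0, hw0b, hw0c⟩ := exists_le_covby hbv
  have hrw0 : rk w0 = 5 := by have := hrk.2 w0 v hw0c; omega
  have hbw0 : (⊥:α) < w0 := lt_of_le_of_rk_lt hrk bot_le (by omega)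
  set c := (univ.filter fun g2 => (⊥:α) ≤ g2 ∧ g2 ⋖ w0).card with hc
  have hD5 : D 5 = c * 120 := by
    have hmul := card_down_mul (x := (⊥:α)) (y := w0) hbw0.ne (t := 120) (fun g2 _ hg2 => by
      have hrg : rk g2 = 4 := by have := hrk.2 g2 w0 hg2; omega
      exact rank4_sheffer hrk hE hS hB3 hD3 hrg)
    have hcc : chainCount ⊥ w0 = D 5 := by rw [hS.1 w0, hrw0]
    rw [hcc] at hmul
    exact hmul.symm
  have hcoatomdown : ∀ w, w ≤ v → rk w = 5 →
      (univ.filter fun g2 => (⊥:α) ≤ g2 ∧ g2 ⋖ w).card = c := by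
    intro w hw1 hw2
    have hbw : (⊥:α) < w := lt_of_le_of_rk_lt hrk bot_le (by omega)
    have hmul := card_down_mul (x := (⊥:α)) (y := w) hbw.ne (t := 120) (fun g2 _ hg2 => by
      have hrg : rk g2 = 4 := by have := hrk.2 g2 w hg2; omega
      exact rank4_sheffer hrk hE hS hB3 hD3 hrg)
    have hcc : chainCount ⊥ w = D 5 := by rw [hS.1 w, hw2]
    rw [hcc, hD5] at hmul
    exact Nat.eq_of_mul_eq_mul_right (by norm_num) hmul
  -- flag count between levels 1 and 2
  have hflag12 := double_count L1 L2 (fun z e => z ⋖ e)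
  have hper1 : ∀ z ∈ L1, (L2.filter fun e => z ⋖ e).card = k := by
    intro z hz
    simp only [hL1, mem_filter, mem_univ, true_and] at hz
    obtain ⟨_, hz2, hz3⟩ := hz
    have hzc : (⊥:α) ⋖ z :=
      covby_of_lt_rk hrk (lt_of_le_of_rk_lt hrk bot_le (by omega)) (by omega)
    have hset : L2.filter (fun e => z ⋖ e) = univ.filter fun e => z ⋖ e ∧ e ≤ v := by
      ext e
      simp only [hL2, mem_filter, mem_univ, true_and]
      constructor
      · rintro ⟨⟨_, h2, _⟩, h4⟩
        exact ⟨h4, h2⟩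
      · rintro ⟨h1, h2⟩
        have := hrk.2 z e h1
        exact ⟨⟨bot_le, h2, by omega⟩, h1⟩
    rw [hset]
    exact hatomup z hzc hz2
  have hper2 : ∀ e ∈ L2, (L1.filter fun z => z ⋖ e).card = 2 := by
    intro e he
    simp only [hL2, mem_filter, mem_univ, true_and] at he
    obtain ⟨_, he2, he3⟩ := he
    have hbe : (⊥:α) < e := lt_of_le_of_rk_lt hrk bot_le (by omega)
    have hset : L1.filter (fun z => z ⋖ e)
        = univ.filter fun z => (⊥:α) ≤ z ∧ z ≤ e ∧ rk z = rk (⊥:α) + 1 := by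
      ext z
      simp only [hL1, mem_filter, mem_univ, true_and]
      constructor
      · rintro ⟨⟨_, _, h3⟩, h4⟩
        exact ⟨bot_le, h4.lt.le, h3⟩
      · rintro ⟨_, h2, h3⟩
        have hze : z ⋖ e := covby_of_lt_rk hrk (lt_of_le_of_rk_lt hrk h2 (by omega)) (by omega)
        exact ⟨⟨bot_le, h2.trans he2, h3⟩, hze⟩
    rw [hset]
    exact ep_two hrk hE hbe (by omega)
  rw [Finset.sum_congr rfl hper1, Finset.sum_congr rfl hper2,
      Finset.sum_const, Finset.sum_const, smul_eq_mul, smul_eq_mul] at hflag12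
  -- flag count between levels 2 and 3
  have hflag23 := double_count L2 L3 (fun e f => e ⋖ f)
  have hper2u : ∀ e ∈ L2, (L3.filter fun f => e ⋖ f).card = 4 := by
    intro e he
    simp only [hL2, mem_filter, mem_univ, true_and] at he
    obtain ⟨_, he2, he3⟩ := he
    have hset : L3.filter (fun f => e ⋖ f) = univ.filter fun f => e ⋖ f ∧ f ≤ v := by
      ext f
      simp only [hL3, mem_filter, mem_univ, true_and]
      constructor
      · rintro ⟨⟨_, h2, _⟩, h4⟩
        exact ⟨h4, h2⟩
      · rintro ⟨h1, h2⟩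
        have := hrk.2 e f h1
        exact ⟨⟨bot_le, h2, by omega⟩, h1⟩
    rw [hset]
    exact hup4 e he2 (by omega)
  have hper3d : ∀ f ∈ L3, (L2.filter fun e => e ⋖ f).card = 5 := by
    intro f hf
    simp only [hL3, mem_filter, mem_univ, true_and] at hf
    obtain ⟨_, hf2, hf3⟩ := hf
    have hbf : (⊥:α) < f := lt_of_le_of_rk_lt hrk bot_le (by omega)
    have hset : L2.filter (fun e => e ⋖ f) = univ.filter fun e => (⊥:α) ≤ e ∧ e ⋖ f := by
      ext e
      simp only [hL2, mem_filter, mem_univ, true_and]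
      constructor
      · rintro ⟨_, h2⟩
        exact ⟨bot_le, h2⟩
      · rintro ⟨_, h2⟩
        have := hrk.2 e f h2
        exact ⟨⟨bot_le, h2.lt.le.trans hf2, by omega⟩, h2⟩
    rw [hset]
    have hmul := card_down_mul (x := (⊥:α)) (y := f) hbf.ne (t := 2) (fun e _ he2 => by
      have hre : rk e = 2 := by have := hrk.2 e f he2; omega
      exact chainCount_rank2 hrk hE (lt_of_le_of_rk_lt hrk bot_le (by omega)) (by omega))
    have hccf : chainCount ⊥ f = 10 := by rw [hS.1 f, show rk f = 3 by omega, hD3]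
    omega
  rw [Finset.sum_congr rfl hper2u, Finset.sum_congr rfl hper3d,
      Finset.sum_const, Finset.sum_const, smul_eq_mul, smul_eq_mul] at hflag23
  -- flag count between levels 4 and 5
  have hflag45 := double_count L4 L5 (fun g w => g ⋖ w)
  have hper4u : ∀ g ∈ L4, (L5.filter fun w => g ⋖ w).card = 2 := by
    intro g hg
    simp only [hL4, mem_filter, mem_univ, true_and] at hg
    obtain ⟨_, hg2, hg3⟩ := hg
    have hgv : g < v := lt_of_le_of_rk_lt hrk hg2 (by omega)
    have hset : L5.filter (fun w => g ⋖ w) = univ.filter fun w => g ⋖ w ∧ w ≤ v := by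
      ext w
      simp only [hL5, mem_filter, mem_univ, true_and]
      constructor
      · rintro ⟨⟨_, h2, _⟩, h4⟩
        exact ⟨h4, h2⟩
      · rintro ⟨h1, h2⟩
        have := hrk.2 g w h1
        exact ⟨⟨bot_le, h2, by omega⟩, h1⟩
    rw [hset, diamond_up_set hrk hgv (by omega)]
    exact ep_two hrk hE hgv (by omega)
  have hper5d : ∀ w ∈ L5, (L4.filter fun g => g ⋖ w).card = c := by
    intro w hw
    simp only [hL5, mem_filter, mem_univ, true_and] at hw
    obtain ⟨_, hw2, hw3⟩ := hw
    have hset : L4.filter (fun g => g ⋖ w) = univ.filter fun g2 => (⊥:α) ≤ g2 ∧ g2 ⋖ w := by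
      ext g2
      simp only [hL4, mem_filter, mem_univ, true_and]
      constructor
      · rintro ⟨_, h2⟩
        exact ⟨bot_le, h2⟩
      · rintro ⟨_, h2⟩
        have := hrk.2 g2 w h2
        exact ⟨⟨bot_le, h2.lt.le.trans hw2, by omega⟩, h2⟩
    rw [hset]
    exact hcoatomdown w hw2 (by omega)
  rw [Finset.sum_congr rfl hper4u, Finset.sum_congr rfl hper5d,
      Finset.sum_const, Finset.sum_const, smul_eq_mul, smul_eq_mul] at hflag45
  -- total chain count, two ways
  have hsum1 : chainCount ⊥ v = L1.card * (k * 24) := by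
    rw [chainCount_eq_sum_covby_left hbv.ne]
    have hset : (univ.filter fun z => (⊥:α) ⋖ z ∧ z ≤ v) = L1 := by
      rw [hL1, atoms_set_eq hrk]
    rw [hset]
    apply Finset.sum_const_nat
    intro z hz
    simp only [hL1, mem_filter, mem_univ, true_and] at hz
    have hzb : z ≠ ⊥ := fun he => by rw [he] at hz; omega
    rw [hS.2 z v hzb hz.2.1, show rk v - rk z = 5 by omega, hB5]
  have hsum2 : chainCount ⊥ v = L5.card * (c * 120) := by
    rw [chainCount_eq_sum_covby_right hbv.ne]
    have hset : (univ.filter fun w => (⊥:α) ≤ w ∧ w ⋖ v) = L5 := by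
      rw [hL5, coatoms_set_eq hrk (show rk v = rk (⊥:α) + 5 + 1 by omega)]
    rw [hset]
    apply Finset.sum_const_nat
    intro w hw
    simp only [hL5, mem_filter, mem_univ, true_and] at hw
    rw [hS.1 w, show rk w = 5 by omega, hD5]
  -- Euler-Poincaré for the rank-6 interval
  have hEP := ep_six hrk hE hbv (show rk v = rk (⊥:α) + 6 by omega)
  rw [show (univ.filter fun z => (⊥:α) ≤ z ∧ z ≤ v ∧ rk z = rk (⊥:α) + 1) = L1 from by
        ext z; simp [hL1],
      show (univ.filter fun z => (⊥:α) ≤ z ∧ z ≤ v ∧ rk z = rk (⊥:α) + 2) = L2 from by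
        ext z; simp [hL2],
      show (univ.filter fun z => (⊥:α) ≤ z ∧ z ≤ v ∧ rk z = rk (⊥:α) + 3) = L3 from by
        ext z; simp [hL3],
      show (univ.filter fun z => (⊥:α) ≤ z ∧ z ≤ v ∧ rk z = rk (⊥:α) + 4) = L4 from by
        ext z; simp [hL4],
      show (univ.filter fun z => (⊥:α) ≤ z ∧ z ≤ v ∧ rk z = rk (⊥:α) + 5) = L5 from by
        ext z; simp [hL5]] at hEP
  -- basic inequalities
  have hkN5 : k ≤ L5.card := by
    rw [hk]
    apply Finset.card_le_card
    intro w hw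
    simp only [mem_filter, mem_univ, true_and] at hw
    have := hrk.2 w v hw.2
    simp only [hL5, mem_filter, mem_univ, true_and]
    exact ⟨bot_le, hw.2.lt.le, by omega⟩
  have hk1 : 1 ≤ k := by
    obtain ⟨w, hw1, hw2⟩ := exists_le_covby hz0ltv
    rw [hk]
    exact Finset.card_pos.mpr ⟨w, by simp [hw1, hw2]⟩
  have hc4 : 4 ≤ c := by
    obtain ⟨z1, hz11, hz12⟩ := exists_covby_le hbw0
    have hrz1 : rk z1 = 1 := by have := hrk.2 ⊥ z1 hz11; omega
    have h4 := (rank4_binomial hrk hE hS hB3 (ne_bot_of_gt hz11.lt)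
      (lt_of_le_of_rk_lt hrk hz12 (by omega)) (by omega)).2.2.1
    have hsub : (univ.filter fun w => z1 ≤ w ∧ w ⋖ w0)
        ⊆ univ.filter fun g2 => (⊥:α) ≤ g2 ∧ g2 ⋖ w0 := by
      intro g2 hg2
      simp only [mem_filter, mem_univ, true_and] at hg2 ⊢
      exact ⟨bot_le, hg2.2⟩
    have hle := Finset.card_le_card hsub
    rw [h4] at hle
    rw [hc]
    exact hle
  -- arithmetic consequences
  have hprod : L1.card * (k * 24) = L5.card * (c * 120) := by rw [← hsum1, hsum2]
  have h9 : (k * L1.card) * 24 = ((c * L5.card) * 5) * 24 := by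
    calc (k * L1.card) * 24 = L1.card * (k * 24) := by ring
      _ = L5.card * (c * 120) := hprod
      _ = ((c * L5.card) * 5) * 24 := by ring
  have hkn : k * L1.card = (c * L5.card) * 5 :=
    Nat.eq_of_mul_eq_mul_right (by norm_num) h9
  have hN15 : L1.card + L5.card = 2 + 2 * L4.card := by
    have h12 : k * L1.card = L2.card * 2 := by rw [Nat.mul_comm k]; exact hflag12
    have h45 : c * L5.card = L4.card * 2 := by rw [Nat.mul_comm c]; exact hflag45.symm
    have hY : k * L1.card = L4.card * 10 := by rw [hkn, h45]; ring
    omega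
  have hbig : 5 * (c * L5.card) + k * L5.card = 2 * k + k * (c * L5.card) := by
    have h45 : c * L5.card = L4.card * 2 := by rw [Nat.mul_comm c]; exact hflag45.symm
    have h2 : k * L1.card + k * L5.card = 2 * k + k * (2 * L4.card) := by
      calc k * L1.card + k * L5.card = k * (L1.card + L5.card) := by ring
        _ = k * (2 + 2 * L4.card) := by rw [hN15]
        _ = 2 * k + k * (2 * L4.card) := by ring
    have h3 : k * (2 * L4.card) = k * (c * L5.card) := by rw [h45]; ring
    calc 5 * (c * L5.card) + k * L5.card = k * L1.card + k * L5.card := by rw [hkn]; ring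
      _ = 2 * k + k * (2 * L4.card) := h2
      _ = 2 * k + k * (c * L5.card) := by rw [h3]
  -- k ≤ 6
  have hk6 : k ≤ 6 := by
    by_contra hk7
    push_neg at hk7
    have h7 : 7 ≤ k := hk7
    have hT4 : 4 * L5.card ≤ c * L5.card := Nat.mul_le_mul_right _ hc4
    have hZ : 4 * (k * L5.card) ≤ k * (c * L5.card) := by
      calc 4 * (k * L5.card) = k * (4 * L5.card) := by ring
        _ ≤ k * (c * L5.card) := Nat.mul_le_mul_left _ hT4
    have hKT : 7 * (c * L5.card) ≤ k * (c * L5.card) := Nat.mul_le_mul_right _ h7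
    have h7N : 7 * L5.card ≤ k * L5.card := Nat.mul_le_mul_right _ h7
    set T := c * L5.card with hT
    set KT := k * (c * L5.card) with hKT2
    set Z := k * L5.card with hZ2
    omega
  -- pair-counting argument: k = 5
  have hk5 : k = 5 := by
    set A0 := univ.filter fun e => z0 ⋖ e ∧ e ≤ v with hA0
    have hA0card : A0.card = k := hatomup z0 hz0c hz0v
    set F2 := univ.filter fun f => z0 ≤ f ∧ f ≤ v ∧ rk f = 3 with hF2
    have hflagA := double_count A0 F2 (fun e f => e ⋖ f)
    have hpA : ∀ e ∈ A0, (F2.filter fun f => e ⋖ f).card = 4 := by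
      intro e he
      simp only [hA0, mem_filter, mem_univ, true_and] at he
      have hre : rk e = 2 := by have := hrk.2 z0 e he.1; omega
      have hset : F2.filter (fun f => e ⋖ f) = univ.filter fun f => e ⋖ f ∧ f ≤ v := by
        ext f
        simp only [hF2, mem_filter, mem_univ, true_and]
        constructor
        · rintro ⟨⟨_, h2, _⟩, h4⟩
          exact ⟨h4, h2⟩
        · rintro ⟨h1, h2⟩
          have := hrk.2 e f h1
          exact ⟨⟨(he.1.lt.trans h1.lt).le, h2, by omega⟩, h1⟩
      rw [hset]
      exact hup4 e he.2 hre
    have hpF : ∀ f ∈ F2, (A0.filter fun e => e ⋖ f).card = 2 := by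
      intro f hf
      simp only [hF2, mem_filter, mem_univ, true_and] at hf
      obtain ⟨hf1, hf2, hf3⟩ := hf
      have hz0f : z0 < f := lt_of_le_of_rk_lt hrk hf1 (by omega)
      have hset : A0.filter (fun e => e ⋖ f)
          = univ.filter fun e => z0 ≤ e ∧ e ≤ f ∧ rk e = rk z0 + 1 := by
        ext e
        simp only [hA0, mem_filter, mem_univ, true_and]
        constructor
        · rintro ⟨⟨h1, _⟩, h3⟩
          exact ⟨h1.lt.le, h3.lt.le, hrk.2 z0 e h1⟩
        · rintro ⟨h1, h2, h3⟩
          have h4 : z0 ⋖ e := covby_of_lt_rk hrk (lt_of_le_of_rk_lt hrk h1 (by omega)) h3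
          have h5 : e ⋖ f := covby_of_lt_rk hrk (lt_of_le_of_rk_lt hrk h2 (by omega)) (by omega)
          exact ⟨⟨h4, h2.trans hf2⟩, h5⟩
      rw [hset]
      exact ep_two hrk hE hz0f (by omega)
    rw [Finset.sum_congr rfl hpA, Finset.sum_congr rfl hpF,
        Finset.sum_const, Finset.sum_const, smul_eq_mul, smul_eq_mul] at hflagA
    have hlam : ∀ p ∈ A0.offDiag, (F2.filter fun f => p.1 ⋖ f ∧ p.2 ⋖ f).card = 1 := by
      rintro ⟨e, e'⟩ hp
      show (F2.filter fun f => e ⋖ f ∧ e' ⋖ f).card = 1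
      rw [Finset.mem_offDiag] at hp
      obtain ⟨he, he', hne⟩ := hp
      simp only [hA0, mem_filter, mem_univ, true_and] at he he'
      have hre : rk e = 2 := by have := hrk.2 z0 e he.1; omega
      have hre' : rk e' = 2 := by have := hrk.2 z0 e' he'.1; omega
      have hge : 0 < (F2.filter fun f => e ⋖ f ∧ e' ⋖ f).card := by
        have hTe1 : (univ.filter fun w => e ≤ w ∧ w ⋖ v).card = 4 := hco4 e he.2 hre
        have hTe2 : (univ.filter fun w => e' ≤ w ∧ w ⋖ v).card = 4 := hco4 e' he'.2 hre'
        have hunion : ((univ.filter fun w => e ≤ w ∧ w ⋖ v)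
            ∪ (univ.filter fun w => e' ≤ w ∧ w ⋖ v)).card ≤ k := by
          rw [hk]
          apply Finset.card_le_card
          intro w hw
          rw [Finset.mem_union] at hw
          rcases hw with hw | hw <;> simp only [mem_filter, mem_univ, true_and] at hw ⊢
          · exact ⟨he.1.lt.le.trans hw.1, hw.2⟩
          · exact ⟨he'.1.lt.le.trans hw.1, hw.2⟩
        have hinter := Finset.card_union_add_card_inter
          (univ.filter fun w => e ≤ w ∧ w ⋖ v) (univ.filter fun w => e' ≤ w ∧ w ⋖ v)
        have hpos : 0 < ((univ.filter fun w => e ≤ w ∧ w ⋖ v)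
            ∩ (univ.filter fun w => e' ≤ w ∧ w ⋖ v)).card := by omega
        obtain ⟨w, hw⟩ := Finset.card_pos.mp hpos
        rw [Finset.mem_inter] at hw
        obtain ⟨hwa, hwb⟩ := hw
        simp only [mem_filter, mem_univ, true_and] at hwa hwb
        have hrw : rk w = 5 := by have := hrk.2 w v hwa.2; omega
        obtain ⟨f, hf1, hf2, hf3⟩ := rank4_join_exists hrk hE hS hB3 hz0b
          (show rk w = rk z0 + 4 by omega) he.1 hwa.1 he'.1 hwb.1 hne
        apply Finset.card_pos.mpr
        refine ⟨f, ?_⟩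
        simp only [hF2, Finset.mem_filter, mem_univ, true_and]
        have hrf : rk f = 3 := by have := hrk.2 e f hf1; omega
        exact ⟨⟨(he.1.lt.trans hf1.lt).le, hf3.trans hwa.2.lt.le, hrf⟩, hf1, hf2⟩
      have hle : (F2.filter fun f => e ⋖ f ∧ e' ⋖ f).card ≤ 1 := by
        by_contra hgt
        push_neg at hgt
        obtain ⟨f, hfm, f', hfm', hff⟩ := Finset.one_lt_card.mp hgt
        simp only [hF2, Finset.mem_filter, mem_univ, true_and] at hfm hfm'
        obtain ⟨⟨hfa, hfb, hfc⟩, hf1, hf2⟩ := hfm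
        obtain ⟨⟨hfa', hfb', hfc'⟩, hf1', hf2'⟩ := hfm'
        have hTf : ∀ fz : α, rk fz = 3 → fz ≤ v → fz ≠ ⊥ →
            (univ.filter fun w => fz ≤ w ∧ w ⋖ v).card = 3 := by
          intro fz h1 h2 h3
          have hmul := card_down_mul (x := fz) (y := v)
            (lt_of_le_of_rk_lt hrk h2 (by omega)).ne (t := 2)
            (fun w hw1 hw2 => by
              have : rk w = 5 := by have := hrk.2 w v hw2; omega
              exact chainCount_rank2 hrk hE (lt_of_le_of_rk_lt hrk hw1 (by omega)) (by omega))
          have hcc : chainCount fz v = 6 := by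
            rw [hS.2 fz v h3 h2, show rk v - rk fz = 3 by omega, hB3]
          omega
        have hTfcard := hTf f hfc hfb (ne_bot_of_gt hf1.lt)
        have hTf'card := hTf f' hfc' hfb' (ne_bot_of_gt hf1'.lt)
        have hsub : (univ.filter fun w => f ≤ w ∧ w ⋖ v)
            ∪ (univ.filter fun w => f' ≤ w ∧ w ⋖ v)
            ⊆ univ.filter fun w => e ≤ w ∧ w ⋖ v := by
          intro w hw
          rw [Finset.mem_union] at hw
          rcases hw with hw | hw <;> simp only [mem_filter, mem_univ, true_and] at hw ⊢
          · exact ⟨hf1.lt.le.trans hw.1, hw.2⟩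
          · exact ⟨hf1'.lt.le.trans hw.1, hw.2⟩
        have hdisj : Disjoint (univ.filter fun w => f ≤ w ∧ w ⋖ v)
            (univ.filter fun w => f' ≤ w ∧ w ⋖ v) := by
          rw [Finset.disjoint_left]
          intro w hw hw'
          simp only [mem_filter, mem_univ, true_and] at hw hw'
          have hrw : rk w = 5 := by have := hrk.2 w v hw.2; omega
          exact hff (rank4_join_unique hrk hE hS hB3 hz0b
            (show rk w = rk z0 + 4 by omega) he.1 (hf1.lt.le.trans hw.1)
            he'.1 (hf2.lt.le.trans hw.1) hne
            ⟨hf1, hf2, hw.1⟩ ⟨hf1', hf2', hw'.1⟩)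
        have hle2 := Finset.card_le_card hsub
        rw [Finset.card_union_of_disjoint hdisj, hTfcard, hTf'card,
            hco4 e he.2 hre] at hle2
        omega
      omega
    have hfinal := double_count A0.offDiag F2 (fun p f => p.1 ⋖ f ∧ p.2 ⋖ f)
    rw [Finset.sum_congr rfl hlam, Finset.sum_const, smul_eq_mul, mul_one] at hfinal
    have hperf : ∀ f ∈ F2, ((A0.offDiag).filter fun p => p.1 ⋖ f ∧ p.2 ⋖ f).card = 2 := by
      intro f hf
      simp only [hF2, mem_filter, mem_univ, true_and] at hf
      obtain ⟨hf1, hf2, hf3⟩ := hf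
      have hDfcard : (univ.filter fun a => z0 ⋖ a ∧ a ⋖ f).card = 2 := by
        rw [covcov_set_eq hrk (show rk f = rk z0 + 2 by omega)]
        exact ep_two hrk hE (lt_of_le_of_rk_lt hrk hf1 (by omega)) (by omega)
      have hseteq : (A0.offDiag).filter (fun p => p.1 ⋖ f ∧ p.2 ⋖ f)
          = (univ.filter fun a => z0 ⋖ a ∧ a ⋖ f).offDiag := by
        ext p
        simp only [Finset.mem_filter, Finset.mem_offDiag, hA0, mem_filter,
          mem_univ, true_and]
        constructor
        · rintro ⟨⟨⟨h1, _⟩, ⟨h2, _⟩, h3⟩, h4, h5⟩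
          exact ⟨⟨h1, h4⟩, ⟨h2, h5⟩, h3⟩
        · rintro ⟨⟨h1, h2⟩, ⟨h3, h4⟩, h5⟩
          exact ⟨⟨⟨h1, h2.lt.le.trans hf2⟩, ⟨h3, h4.lt.le.trans hf2⟩, h5⟩, h2, h4⟩
      rw [hseteq, Finset.offDiag_card, hDfcard]
    rw [Finset.sum_congr rfl hperf, Finset.sum_const, smul_eq_mul] at hfinal
    rw [Finset.offDiag_card, hA0card] at hfinal
    rw [hA0card] at hflagA
    clear_value k
    interval_cases k <;> omega
  -- final contradiction
  rw [hk5] at hbig hkN5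
  set T := c * L5.card with hT
  omega

end Main

end S13

/-- There is no Eulerian Sheffer poset of rank at least `6` with
`B 3 = 6` and `D 3 = 10`. -/
theorem statement13 {α : Type*} [Fintype α] [PartialOrder α] [BoundedOrder α]
    (rk : α → ℕ) (B D : ℕ → ℕ) (hrk : IsRankFunction rk) (hS : IsSheffer rk B D)
    (hE : IsEulerian rk) (hrank : 6 ≤ rk ⊤) (hB3 : B 3 = 6) (hD3 : D 3 = 10) :
    False := by
  classical
  obtain ⟨v, -, -, hv6⟩ := S13.exists_rk_between hrk (x := (⊥ : α)) (m := 6)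
    (by rw [hrk.1]; omega) (le_top : (⊥ : α) ≤ ⊤) hrank
  exact S13.main_contra hrk hE hS hB3 hD3 hv6
end
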